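/- arXiv:0910.5439 — 4 statements merged into one kernel-verified Lean document; each statement's English description precedes it below -/
import Mathlib

section
/- Let α ∈ (0,1/2) and u₁(z) = (1/α) K_0(z^α/α). Then for every ξ > 0 and z ≥ ξ^{-1/α}, one has ∫_z^∞ s u₁(s ξ^{1/α})² ds ≤ C z^{2−2α} ξ^{−2} e^{−2 z^α ξ/α}, for a constant C depending only on α. -/
open MeasureTheory

/-- The modified Bessel function of the second kind of order `0`,
via the integral representation `K₀(x) = ∫_0^∞ exp (-x cosh t) dt`. -/
noncomputable def besselK0 (x : ℝ) : ℝ :=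
  ∫ t in Set.Ioi (0 : ℝ), Real.exp (-x * Real.cosh t)

open Real Filter in
lemma besselK0_nonneg (x : ℝ) : 0 ≤ besselK0 x :=
  integral_nonneg fun t => (Real.exp_pos _).le

open Real Filter in
lemma one_add_sq_half_le_cosh (t : ℝ) : 1 + t ^ 2 / 2 ≤ Real.cosh t := by
  have h1 : Real.cosh t = 1 + 2 * Real.sinh (t / 2) ^ 2 := by
    have := Real.cosh_two_mul (t / 2)
    have h2 := Real.cosh_sq (t / 2)
    rw [show 2 * (t / 2) = t by ring] at this
    rw [this, h2]; ring
  have h3 : (t / 2) ^ 2 ≤ Real.sinh (t / 2) ^ 2 := by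
    rcases le_or_gt 0 t with h | h
    · have : t / 2 ≤ Real.sinh (t / 2) := (Real.self_le_sinh_iff).2 (by linarith)
      exact pow_le_pow_left₀ (by linarith) this 2
    · have h4 : Real.sinh (t / 2) ≤ t / 2 := by
        have := (Real.self_le_sinh_iff (x := -(t / 2))).2 (by linarith)
        rw [Real.sinh_neg] at this; linarith
      have h5 : t / 2 < 0 := by linarith
      calc (t / 2) ^ 2 = (-(t / 2)) ^ 2 := by ring
        _ ≤ (-Real.sinh (t / 2)) ^ 2 := pow_le_pow_left₀ (by linarith) (by linarith) 2
        _ = Real.sinh (t / 2) ^ 2 := by ring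
  nlinarith [h3]

open Real Filter in
lemma besselK0_le {x : ℝ} (hx : 0 < x) :
    besselK0 x ≤ Real.exp (-x) * (Real.sqrt (π / (x / 2)) / 2) := by
  have hint : Integrable (fun t => Real.exp (-x) * Real.exp (-(x / 2) * t ^ 2))
      (volume.restrict (Set.Ioi (0 : ℝ))) := by
    have : IntegrableOn (fun t : ℝ => Real.exp (-(x / 2) * t ^ 2)) (Set.Ioi 0) :=
      integrableOn_Ioi_exp_neg_mul_sq_iff.2 (by linarith)
    exact this.const_mul _
  have hmono : besselK0 x ≤ ∫ t in Set.Ioi (0 : ℝ),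
      Real.exp (-x) * Real.exp (-(x / 2) * t ^ 2) := by
    refine integral_mono_of_nonneg ?_ hint ?_
    · filter_upwards with t using (Real.exp_pos _).le
    · filter_upwards [self_mem_ae_restrict (measurableSet_Ioi (a := (0:ℝ)))] with t _
      rw [← Real.exp_add]
      apply Real.exp_le_exp.2
      have := one_add_sq_half_le_cosh t
      nlinarith [this, hx]
  calc besselK0 x ≤ _ := hmono
    _ = Real.exp (-x) * (Real.sqrt (π / (x / 2)) / 2) := by
      rw [MeasureTheory.integral_const_mul, integral_gaussian_Ioi]

open Real Filter in
lemma besselK0_sq_le {x : ℝ} (hx : 0 < x) :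
    besselK0 x ^ 2 ≤ π / (2 * x) * Real.exp (-(2 * x)) := by
  have h1 := besselK0_le hx
  have h0 := besselK0_nonneg x
  have h2 : besselK0 x ^ 2 ≤ (Real.exp (-x) * (Real.sqrt (π / (x / 2)) / 2)) ^ 2 :=
    pow_le_pow_left₀ h0 h1 2
  have h3 : Real.sqrt (π / (x / 2)) ^ 2 = π / (x / 2) :=
    Real.sq_sqrt (by positivity)
  have h4 : Real.exp (-x) ^ 2 = Real.exp (-(2 * x)) := by
    rw [sq, ← Real.exp_add]; congr 1; ring
  calc besselK0 x ^ 2 ≤ _ := h2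
    _ = Real.sqrt (π / (x / 2)) ^ 2 / 4 * Real.exp (-x) ^ 2 := by ring
    _ = π / (2 * x) * Real.exp (-(2 * x)) := by
      rw [h3, h4]; congr 1; field_simp; ring

open Real Filter in
lemma tendsto_rpow_mul_exp_neg_rpow {p a c : ℝ} (ha : 0 < a) (hc : 0 < c) :
    Tendsto (fun s : ℝ => s ^ p * Real.exp (-(c * s ^ a))) atTop (nhds 0) := by
  have h1 := tendsto_rpow_mul_exp_neg_mul_atTop_nhds_zero (p / a) c hc
  have h2 : Tendsto (fun s : ℝ => s ^ a) atTop atTop := tendsto_rpow_atTop ha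
  refine (h1.comp h2).congr' ?_
  filter_upwards [eventually_gt_atTop (0 : ℝ)] with s hs
  simp only [Function.comp]
  rw [← Real.rpow_mul hs.le, mul_comm a (p / a), div_mul_cancel₀ p ha.ne', neg_mul]

/-- For `α ∈ (0,1/2)` and `u₁(z) = (1/α) K₀(z^α/α)`, for all `ξ > 0` and `z ≥ ξ^(-1/α)` one has
`∫_z^∞ s u₁(s ξ^(1/α))² ds ≤ C z^(2−2α) ξ^(−2) exp (−2 z^α ξ / α)`,
with a constant `C` depending only on `α`. -/
theorem stmt6 (α : ℝ) (hα : α ∈ Set.Ioo (0 : ℝ) (1 / 2))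
    (u₁ : ℝ → ℝ) (hu₁ : u₁ = fun z => (1 / α) * besselK0 (z ^ α / α)) :
    ∃ C > (0 : ℝ), ∀ ξ > (0 : ℝ), ∀ z : ℝ, ξ ^ (-(1 : ℝ) / α) ≤ z →
      ∫ s in Set.Ioi z, s * (u₁ (s * ξ ^ ((1 : ℝ) / α))) ^ 2
        ≤ C * z ^ (2 - 2 * α) * ξ ^ (-(2 : ℝ)) * Real.exp (-2 * z ^ α * ξ / α) := by
  obtain ⟨hα0, hα2⟩ := hα
  subst hu₁
  refine ⟨Real.pi / (4 * α ^ 2), by positivity, ?_⟩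
  intro ξ hξ z hz
  have hz0 : 0 < z := lt_of_lt_of_le (Real.rpow_pos_of_pos hξ _) hz
  have hz1 : (1 : ℝ) ≤ z ^ α * ξ := by
    have h1 : (ξ ^ (-(1:ℝ) / α)) ^ α ≤ z ^ α :=
      Real.rpow_le_rpow (Real.rpow_pos_of_pos hξ _).le hz hα0.le
    have h2 : (ξ ^ (-(1:ℝ) / α)) ^ α = ξ⁻¹ := by
      rw [← Real.rpow_mul hξ.le, div_mul_cancel₀ _ hα0.ne', Real.rpow_neg_one]
    rw [h2] at h1
    calc (1:ℝ) = ξ⁻¹ * ξ := (inv_mul_cancel₀ hξ.ne').symm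
      _ ≤ z ^ α * ξ := mul_le_mul_of_nonneg_right h1 hξ.le
  have hone : ∀ s : ℝ, z ≤ s → (1 : ℝ) ≤ s ^ α * ξ := by
    intro s hsz
    have h1 : z ^ α ≤ s ^ α := Real.rpow_le_rpow hz0.le hsz hα0.le
    have := mul_le_mul_of_nonneg_right h1 hξ.le
    linarith
  set E : ℝ → ℝ := fun s => Real.exp (-2 * s ^ α * ξ / α) with hE
  set g' : ℝ → ℝ := fun s =>
    (2 * ξ * s ^ (1 - α) - (2 - 2 * α) * s ^ (1 - 2 * α)) * E s with hg'
  -- derivative of -(s^(2-2α) E s)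
  have hasderiv : ∀ s ∈ Set.Ici z,
      HasDerivAt (fun s => -(s ^ (2 - 2 * α) * E s)) (g' s) s := by
    intro s hs
    have hspos : 0 < s := lt_of_lt_of_le hz0 hs
    have hd1 : HasDerivAt (fun s : ℝ => s ^ (2 - 2 * α))
        ((2 - 2 * α) * s ^ (2 - 2 * α - 1)) s :=
      Real.hasDerivAt_rpow_const (Or.inl hspos.ne')
    have hd2 : HasDerivAt (fun s : ℝ => -2 * s ^ α * ξ / α)
        (-2 * (α * s ^ (α - 1)) * ξ / α) s :=
      (((Real.hasDerivAt_rpow_const (Or.inl hspos.ne')).const_mul (-2)).mul_const ξ).div_const α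
    have hd3 : HasDerivAt E (E s * (-2 * (α * s ^ (α - 1)) * ξ / α)) s := hd2.exp
    have hd4 := (hd1.mul hd3).neg
    have e1 : s ^ (2 - 2 * α - 1 : ℝ) = s ^ (1 - 2 * α : ℝ) := by
      congr 1; ring
    have e2 : s ^ (2 - 2 * α : ℝ) * s ^ (α - 1 : ℝ) = s ^ (1 - α : ℝ) := by
      rw [← Real.rpow_add hspos]; congr 1; ring
    have key : -((2 - 2 * α) * s ^ (2 - 2 * α - 1 : ℝ) * E s
        + s ^ (2 - 2 * α : ℝ) * (E s * (-2 * (α * s ^ (α - 1 : ℝ)) * ξ / α))) = g' s := by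
      rw [hg', e1]
      have e3 : s ^ (2 - 2 * α : ℝ) * (E s * (-2 * (α * s ^ (α - 1 : ℝ)) * ξ / α))
          = -2 * ξ * (s ^ (2 - 2 * α : ℝ) * s ^ (α - 1 : ℝ)) * E s := by
        field_simp
      rw [e3, e2]; ring
    exact key ▸ hd4
  have hkey : ∀ s ∈ Set.Ioi z, 2 * α * ξ * s ^ (1 - α) * E s ≤ g' s := by
    intro s hs
    have hspos : 0 < s := lt_trans hz0 hs
    have hP : (0:ℝ) < s ^ (1 - α : ℝ) := Real.rpow_pos_of_pos hspos _
    have hQ : s ^ (1 - 2 * α : ℝ) = s ^ (1 - α : ℝ) * (s ^ (α : ℝ))⁻¹ := by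
      rw [← Real.rpow_neg hspos.le, ← Real.rpow_add hspos]; congr 1; ring
    have hpow : (0:ℝ) < s ^ (α : ℝ) := Real.rpow_pos_of_pos hspos _
    have h1s : (1:ℝ) ≤ s ^ α * ξ := hone s (le_of_lt hs)
    have hinv : (s ^ (α:ℝ))⁻¹ ≤ ξ := by
      have hic : (s ^ (α:ℝ))⁻¹ * (s ^ (α:ℝ)) = 1 := inv_mul_cancel₀ hpow.ne'
      nlinarith [mul_le_mul_of_nonneg_left h1s (inv_nonneg.2 hpow.le)]
    have hmul : (2 - 2 * α) * s ^ (1 - α : ℝ) * (s ^ (α:ℝ))⁻¹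
        ≤ (2 - 2 * α) * s ^ (1 - α : ℝ) * ξ :=
      mul_le_mul_of_nonneg_left hinv (by nlinarith)
    have hEpos : (0:ℝ) < E s := Real.exp_pos _
    rw [hg']
    have hcoef : 2 * α * ξ * s ^ (1 - α : ℝ)
        ≤ 2 * ξ * s ^ (1 - α : ℝ) - (2 - 2 * α) * s ^ (1 - 2 * α : ℝ) := by
      rw [hQ]; nlinarith [hmul]
    exact mul_le_mul_of_nonneg_right hcoef hEpos.le
  have hnonneg : ∀ s ∈ Set.Ioi z, 0 ≤ g' s := by
    intro s hs
    refine le_trans ?_ (hkey s hs)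
    have hspos : 0 < s := lt_trans hz0 hs
    positivity
  have htend : Filter.Tendsto (fun s => -(s ^ (2 - 2 * α) * E s)) Filter.atTop (nhds 0) := by
    have h0 := (tendsto_rpow_mul_exp_neg_rpow (p := 2 - 2 * α) (a := α) (c := 2 * ξ / α)
      hα0 (by positivity)).neg
    rw [neg_zero] at h0
    refine h0.congr fun s => ?_
    rw [hE]
    congr 2
    ring
  have hcalc : ∫ s in Set.Ioi z, g' s = z ^ (2 - 2 * α) * E z := by
    rw [integral_Ioi_of_hasDerivAt_of_nonneg' hasderiv hnonneg htend]
    ring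
  have hintg : IntegrableOn g' (Set.Ioi z) :=
    integrableOn_Ioi_deriv_of_nonneg' hasderiv hnonneg htend
  set c : ℝ := Real.pi / (4 * α ^ 2) * ξ⁻¹ * ξ⁻¹ with hc
  have hc0 : 0 ≤ c := by positivity
  have hbound : ∀ s ∈ Set.Ioi z,
      s * ((fun w => (1 / α) * besselK0 (w ^ α / α)) (s * ξ ^ ((1:ℝ) / α))) ^ 2 ≤ c * g' s := by
    intro s hs
    have hspos : 0 < s := lt_trans hz0 hs
    simp only []
    have harg : (s * ξ ^ ((1:ℝ) / α)) ^ α = s ^ α * ξ := by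
      rw [Real.mul_rpow hspos.le (Real.rpow_nonneg hξ.le _), ← Real.rpow_mul hξ.le,
        one_div_mul_cancel hα0.ne', Real.rpow_one]
    rw [harg]
    have hx : 0 < s ^ α * ξ / α := by
      have := Real.rpow_pos_of_pos hspos α
      positivity
    have hK := besselK0_sq_le hx
    have hexp : Real.exp (-(2 * (s ^ α * ξ / α))) = E s := by
      rw [hE]; congr 1; ring
    rw [hexp] at hK
    have hpow : (0:ℝ) < s ^ (α : ℝ) := Real.rpow_pos_of_pos hspos _
    have hsub : s ^ ((1:ℝ) - α) = s / s ^ α := by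
      rw [Real.rpow_sub hspos, Real.rpow_one]
    have hid : s * (1 / α) ^ 2 * (Real.pi / (2 * (s ^ α * ξ / α)) * E s)
        = Real.pi / (2 * α) * ξ⁻¹ * s ^ ((1:ℝ) - α) * E s := by
      rw [hsub]
      field_simp
    have step1 : s * ((1 / α) * besselK0 (s ^ α * ξ / α)) ^ 2
        ≤ Real.pi / (2 * α) * ξ⁻¹ * s ^ ((1:ℝ) - α) * E s := by
      calc s * ((1 / α) * besselK0 (s ^ α * ξ / α)) ^ 2
          = (s * (1 / α) ^ 2) * besselK0 (s ^ α * ξ / α) ^ 2 := by ring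
        _ ≤ (s * (1 / α) ^ 2) * (Real.pi / (2 * (s ^ α * ξ / α)) * E s) := by
            apply mul_le_mul_of_nonneg_left hK
            positivity
        _ = Real.pi / (2 * α) * ξ⁻¹ * s ^ ((1:ℝ) - α) * E s := by
            rw [← hid]
    have heq : c * (2 * α * ξ * s ^ (1 - α) * E s)
        = Real.pi / (2 * α) * ξ⁻¹ * s ^ ((1:ℝ) - α) * E s := by
      rw [hc]
      field_simp
      ring
    have := mul_le_mul_of_nonneg_left (hkey s hs) hc0
    rw [heq] at this
    exact le_trans step1 this
  have hxi2 : ξ ^ (-(2:ℝ)) = ξ⁻¹ * ξ⁻¹ := by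
    rw [Real.rpow_neg hξ.le, show (2:ℝ) = ((2:ℕ):ℝ) by norm_num, Real.rpow_natCast,
      pow_two, mul_inv]
  calc ∫ s in Set.Ioi z, s * ((fun w => (1 / α) * besselK0 (w ^ α / α)) (s * ξ ^ ((1:ℝ) / α))) ^ 2
      ≤ ∫ s in Set.Ioi z, c * g' s := by
        refine integral_mono_of_nonneg ?_ (hintg.const_mul c) ?_
        · filter_upwards [self_mem_ae_restrict (measurableSet_Ioi (a := z))] with s hs
          have hspos : 0 < s := lt_trans hz0 hs
          have h2 := sq_nonneg ((fun w => (1 / α) * besselK0 (w ^ α / α)) (s * ξ ^ ((1:ℝ) / α)))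
          positivity
        · filter_upwards [self_mem_ae_restrict (measurableSet_Ioi (a := z))] with s hs
          exact hbound s hs
    _ = c * ∫ s in Set.Ioi z, g' s := integral_const_mul c _
    _ = c * (z ^ (2 - 2 * α) * E z) := by rw [hcalc]
    _ = Real.pi / (4 * α ^ 2) * z ^ (2 - 2 * α) * ξ ^ (-(2:ℝ)) * E z := by
        rw [hxi2, hc]; ring
end

section
/- Let α ∈ (0,1/2) and u₀(z) = I_0(z^α/α). Then for every ξ > 0 and z ≥ ξ^{-1/α}, one has ∫_0^z s u₀(s ξ^{1/α})² ds ≤ C z^{2−2α} ξ^{−2} e^{2 z^α ξ/α}, for a constant C depending only on α. -/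
open MeasureTheory

/-- The modified Bessel function of the first kind of order `0`,
via the integral representation `I₀(x) = (1/π) ∫_0^π exp (x cos t) dt`. -/
noncomputable def besselI0 (x : ℝ) : ℝ :=
  (1 / Real.pi) * ∫ t in (0 : ℝ)..Real.pi, Real.exp (x * Real.cos t)

lemma besselI0_nonneg (x : ℝ) : 0 ≤ besselI0 x := by
  unfold besselI0
  have h1 : (0:ℝ) ≤ 1 / Real.pi := by positivity
  refine mul_nonneg h1 ?_
  apply intervalIntegral.integral_nonneg Real.pi_pos.le
  intro t _; positivity

lemma besselI0_le_exp {x : ℝ} (hx : 0 ≤ x) : besselI0 x ≤ Real.exp x := by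
  unfold besselI0
  have h : (∫ t in (0:ℝ)..Real.pi, Real.exp (x * Real.cos t))
      ≤ ∫ _t in (0:ℝ)..Real.pi, Real.exp x := by
    apply intervalIntegral.integral_mono_on Real.pi_pos.le
    · exact (Real.continuous_exp.comp (continuous_const.mul Real.continuous_cos)).intervalIntegrable _ _
    · exact intervalIntegrable_const
    · intro t _
      exact Real.exp_le_exp.2 (by nlinarith [Real.cos_le_one t, Real.neg_one_le_cos t])
  rw [intervalIntegral.integral_const] at h
  have hπ := Real.pi_pos
  calc (1 / Real.pi) * ∫ t in (0:ℝ)..Real.pi, Real.exp (x * Real.cos t)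
      ≤ (1 / Real.pi) * ((Real.pi - 0) • Real.exp x) := by
        apply mul_le_mul_of_nonneg_left h (by positivity)
    _ = Real.exp x := by rw [sub_zero, smul_eq_mul]; field_simp

lemma besselI0_decay {t : ℝ} (ht : 1 ≤ t) : besselI0 t ≤ 2 * Real.exp t / Real.sqrt t := by
  have ht0 : (0:ℝ) < t := by linarith
  have hst : (0:ℝ) < Real.sqrt t := Real.sqrt_pos.2 ht0
  have hst1 : (1:ℝ) ≤ Real.sqrt t := by
    rw [show (1:ℝ) = Real.sqrt 1 by simp]; exact Real.sqrt_le_sqrt ht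
  set δ : ℝ := (Real.sqrt t)⁻¹ with hδdef
  have hδ0 : 0 < δ := by positivity
  have hδ1 : δ ≤ 1 := by rw [hδdef]; exact inv_le_one_of_one_le₀ hst1
  have hπ := Real.pi_pos
  have hδπ : δ ≤ Real.pi := le_trans hδ1 (by nlinarith [Real.pi_gt_three])
  set a : ℝ := 2 * Real.sqrt t / Real.pi ^ 2 with hadef
  have ha0 : 0 < a := by positivity
  have hcont : ∀ c : ℝ, Continuous fun θ : ℝ => Real.exp (c * Real.cos θ) :=
    fun c => Real.continuous_exp.comp (continuous_const.mul Real.continuous_cos)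
  -- split at δ
  have hsplit : (∫ θ in (0:ℝ)..Real.pi, Real.exp (t * Real.cos θ))
      = (∫ θ in (0:ℝ)..δ, Real.exp (t * Real.cos θ))
        + ∫ θ in δ..Real.pi, Real.exp (t * Real.cos θ) := by
    rw [intervalIntegral.integral_add_adjacent_intervals
      ((hcont t).intervalIntegrable _ _) ((hcont t).intervalIntegrable _ _)]
  -- first piece
  have h1 : (∫ θ in (0:ℝ)..δ, Real.exp (t * Real.cos θ)) ≤ δ * Real.exp t := by
    have : (∫ θ in (0:ℝ)..δ, Real.exp (t * Real.cos θ))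
        ≤ ∫ _θ in (0:ℝ)..δ, Real.exp t := by
      apply intervalIntegral.integral_mono_on hδ0.le
        ((hcont t).intervalIntegrable _ _) intervalIntegrable_const
      intro θ _
      exact Real.exp_le_exp.2 (by nlinarith [Real.cos_le_one θ])
    simpa using this
  -- second piece
  have h2 : (∫ θ in δ..Real.pi, Real.exp (t * Real.cos θ))
      ≤ ∫ θ in δ..Real.pi, Real.exp (t - a * θ) := by
    apply intervalIntegral.integral_mono_on hδπ ((hcont t).intervalIntegrable _ _)
    · exact (Real.continuous_exp.comp (continuous_const.sub
        (continuous_const.mul continuous_id))).intervalIntegrable _ _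
    · intro θ hθ
      apply Real.exp_le_exp.2
      have hθ0 : 0 < θ := lt_of_lt_of_le hδ0 hθ.1
      have hcos : Real.cos θ ≤ 1 - 2 / Real.pi ^ 2 * θ ^ 2 := by
        apply Real.cos_le_one_sub_mul_cos_sq
        rw [abs_of_nonneg hθ0.le]; exact hθ.2
      have hq : δ * θ ≤ θ ^ 2 := by nlinarith [hθ.1]
      have key : t * Real.cos θ ≤ t - 2 / Real.pi ^ 2 * t * θ ^ 2 := by nlinarith
      have h2' : 2 / Real.pi ^ 2 * t * (δ * θ) ≤ 2 / Real.pi ^ 2 * t * θ ^ 2 := by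
        apply mul_le_mul_of_nonneg_left hq (by positivity)
      have hts : Real.sqrt t * Real.sqrt t = t := Real.mul_self_sqrt ht0.le
      have harg : 2 / Real.pi ^ 2 * t * (δ * θ) = a * θ := by
        rw [hadef, hδdef]; field_simp; linear_combination (-1) * hts
      calc t * Real.cos θ ≤ t - 2 / Real.pi ^ 2 * t * (δ * θ) := by linarith
        _ = t - a * θ := by rw [harg]
  -- evaluate exponential integral
  have h3 : (∫ θ in δ..Real.pi, Real.exp (t - a * θ)) ≤ Real.exp t / a := by
    have hFT : (∫ θ in δ..Real.pi, Real.exp (t - a * θ))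
        = -(Real.exp (t - a * Real.pi) / a) - (-(Real.exp (t - a * δ) / a)) := by
      apply intervalIntegral.integral_eq_sub_of_hasDerivAt
        (f := fun θ => -(Real.exp (t - a * θ) / a))
      · intro θ _
        have h : HasDerivAt (fun x : ℝ => -(Real.exp (t - a * x) / a))
            (-(Real.exp (t - a * θ) * -(a * 1) / a)) θ :=
          ((((hasDerivAt_id θ).const_mul a).const_sub t).exp.div_const a).neg
        refine h.congr_deriv ?_
        field_simp [ha0.ne']
      · exact (Real.continuous_exp.comp (continuous_const.sub
          (continuous_const.mul continuous_id))).intervalIntegrable _ _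
    rw [hFT]
    have e1 : Real.exp (t - a * δ) ≤ Real.exp t := Real.exp_le_exp.2 (by nlinarith)
    have e2 : 0 < Real.exp (t - a * Real.pi) := Real.exp_pos _
    rw [show -(Real.exp (t - a * Real.pi) / a) - -(Real.exp (t - a * δ) / a)
      = (Real.exp (t - a * δ) - Real.exp (t - a * Real.pi)) / a by ring]
    gcongr
    linarith
  have hfin : (∫ θ in (0:ℝ)..Real.pi, Real.exp (t * Real.cos θ))
      ≤ Real.exp t / Real.sqrt t * (1 + Real.pi ^ 2 / 2) := by
    rw [hsplit]
    have : Real.exp t / a = Real.exp t / Real.sqrt t * (Real.pi ^ 2 / 2) := by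
      rw [hadef]; field_simp
    have hδe : δ * Real.exp t = Real.exp t / Real.sqrt t := by
      rw [hδdef]; field_simp
    calc _ ≤ δ * Real.exp t + Real.exp t / a := by linarith
      _ = _ := by rw [this, hδe]; ring
  unfold besselI0
  have hK : (1 / Real.pi) * (1 + Real.pi ^ 2 / 2) ≤ 2 := by
    rw [div_mul_eq_mul_div, div_le_iff₀ hπ]
    nlinarith [Real.pi_gt_d6, Real.pi_lt_d2]
  calc (1 / Real.pi) * ∫ θ in (0:ℝ)..Real.pi, Real.exp (t * Real.cos θ)
      ≤ (1 / Real.pi) * (Real.exp t / Real.sqrt t * (1 + Real.pi ^ 2 / 2)) := by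
        apply mul_le_mul_of_nonneg_left hfin (by positivity)
    _ = (1 / Real.pi) * (1 + Real.pi ^ 2 / 2) * (Real.exp t / Real.sqrt t) := by ring
    _ ≤ 2 * (Real.exp t / Real.sqrt t) := by
        apply mul_le_mul_of_nonneg_right hK (by positivity)
    _ = 2 * Real.exp t / Real.sqrt t := by ring

set_option maxHeartbeats  1000000 in
/-- For `α ∈ (0,1/2)` and `u₀(z) = I₀(z^α/α)`, for all `ξ > 0` and `z ≥ ξ^(-1/α)` one has
`∫_0^z s u₀(s ξ^(1/α))² ds ≤ C z^(2−2α) ξ^(−2) exp (2 z^α ξ / α)`,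
with a constant `C` depending only on `α`. -/
theorem stmt7 (α : ℝ) (hα : α ∈ Set.Ioo (0 : ℝ) (1 / 2))
    (u₀ : ℝ → ℝ) (hu₀ : u₀ = fun z => besselI0 (z ^ α / α)) :
    ∃ C > (0 : ℝ), ∀ ξ > (0 : ℝ), ∀ z : ℝ, ξ ^ (-(1 : ℝ) / α) ≤ z →
      ∫ s in Set.Ioo (0 : ℝ) z, s * (u₀ (s * ξ ^ ((1 : ℝ) / α))) ^ 2
        ≤ C * z ^ (2 - 2 * α) * ξ ^ (-(2 : ℝ)) * Real.exp (2 * z ^ α * ξ / α) := by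
  obtain ⟨hα0, hα2⟩ := hα
  have hα1 : α < 1 := by linarith
  have hA1 : (0:ℝ) < α ^ ((1:ℝ)/α) := Real.rpow_pos_of_pos hα0 _
  refine ⟨Real.exp 2 * α ^ ((1:ℝ)/α) + 2 * α, by positivity, ?_⟩
  intro ξ hξ z hz
  have hz0 : 0 < z := lt_of_lt_of_le (Real.rpow_pos_of_pos hξ _) hz
  simp only [hu₀]
  set β := ξ ^ ((1:ℝ)/α) with hβ
  have hβ0 : 0 < β := Real.rpow_pos_of_pos hξ _
  have hkey : ∀ s : ℝ, 0 ≤ s → (s * β) ^ α = s ^ α * ξ := by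
    intro s hs
    rw [Real.mul_rpow hs hβ0.le, hβ, ← Real.rpow_mul hξ.le, one_div,
      inv_mul_cancel₀ hα0.ne', Real.rpow_one]
  set sstar : ℝ := (α / ξ) ^ ((1:ℝ)/α) with hsstar
  have hsstar0 : 0 < sstar := Real.rpow_pos_of_pos (by positivity) _
  set E : ℝ := Real.exp (2 * z ^ α * ξ / α) with hE
  have hE1 : 1 ≤ E := Real.one_le_exp (by positivity)
  set B : ℝ := 4 * α * ξ⁻¹ * z ^ (2 - 2*α) with hB
  have hzp : 0 < z ^ (2 - 2*α) := Real.rpow_pos_of_pos hz0 _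
  have hB0 : 0 < B := by positivity
  set g : ℝ → ℝ := fun s => Real.exp 2 * sstar + B * (s ^ (α-1) * Real.exp (2 * s ^ α * ξ / α))
    with hg
  -- pointwise bound
  have hfg : ∀ s ∈ Set.Ioo (0:ℝ) z, s * (besselI0 ((s * β) ^ α / α)) ^ 2 ≤ g s := by
    intro s hs
    have hs0 : 0 < s := hs.1
    have hsα : 0 < s ^ α := Real.rpow_pos_of_pos hs0 α
    have hrw : (s * β) ^ α / α = s ^ α * ξ / α := by rw [hkey s hs0.le]
    rw [hrw]
    have hBg : 0 ≤ B * (s ^ (α-1) * Real.exp (2 * s ^ α * ξ / α)) := by positivity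
    set t : ℝ := s ^ α * ξ / α with htdef
    have ht0 : 0 < t := by positivity
    have hb0 := besselI0_nonneg t
    rcases le_or_gt t 1 with h1 | h1
    · have hb : besselI0 t ≤ Real.exp 1 :=
        (besselI0_le_exp ht0.le).trans (Real.exp_le_exp.2 h1)
      have hss : s ≤ sstar := by
        have h2 : s ^ α ≤ α / ξ := by
          rw [le_div_iff₀ hξ]
          rw [htdef, div_le_one hα0] at h1
          exact h1
        have h3 : (s ^ α) ^ ((1:ℝ)/α) ≤ (α / ξ) ^ ((1:ℝ)/α) :=
          Real.rpow_le_rpow hsα.le h2 (by positivity)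
        rwa [← Real.rpow_mul hs0.le, mul_one_div, div_self hα0.ne', Real.rpow_one] at h3
      have hsq : besselI0 t ^ 2 ≤ Real.exp 2 := by
        calc besselI0 t ^ 2 ≤ Real.exp 1 ^ 2 := pow_le_pow_left₀ hb0 hb 2
          _ = Real.exp 2 := by rw [← Real.exp_nat_mul]; norm_num
      calc s * besselI0 t ^ 2 ≤ sstar * Real.exp 2 :=
            mul_le_mul hss hsq (sq_nonneg _) hsstar0.le
        _ = Real.exp 2 * sstar := by ring
        _ ≤ g s := by simp only [hg]; linarith
    · have hb := besselI0_decay h1.le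
      have hsq : besselI0 t ^ 2 ≤ 4 * Real.exp (2*t) / t := by
        have h2 := pow_le_pow_left₀ hb0 hb 2
        rw [div_pow, Real.sq_sqrt ht0.le] at h2
        calc besselI0 t ^ 2 ≤ (2 * Real.exp t) ^ 2 / t := h2
          _ = 4 * Real.exp (2*t) / t := by
              rw [show (2:ℝ)*t = t + t by ring, Real.exp_add]; ring
      have step1 : s * besselI0 t ^ 2 ≤ s * (4 * Real.exp (2*t) / t) :=
        mul_le_mul_of_nonneg_left hsq hs0.le
      have hsub : s ^ ((1:ℝ)-α) = s / s ^ α := by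
        rw [Real.rpow_sub hs0, Real.rpow_one]
      have step2 : s * (4 * Real.exp (2*t) / t)
          = 4 * α * ξ⁻¹ * (s ^ ((1:ℝ)-α) * Real.exp (2 * s ^ α * ξ / α)) := by
        rw [hsub, htdef, show 2 * (s ^ α * ξ / α) = 2 * s ^ α * ξ / α by ring]
        field_simp
      have hsplitpow : s ^ ((1:ℝ)-α) = s ^ (2-2*α) * s ^ (α-1) := by
        rw [← Real.rpow_add hs0]; congr 1; ring
      have hzle : s ^ (2-2*α) ≤ z ^ (2-2*α) :=
        Real.rpow_le_rpow hs0.le hs.2.le (by linarith)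
      have hexp : (0:ℝ) < Real.exp (2 * s ^ α * ξ / α) := Real.exp_pos _
      have hsm1 : (0:ℝ) < s ^ (α-1) := Real.rpow_pos_of_pos hs0 _
      have step3 : 4 * α * ξ⁻¹ * (s ^ ((1:ℝ)-α) * Real.exp (2 * s ^ α * ξ / α))
          ≤ B * (s ^ (α-1) * Real.exp (2 * s ^ α * ξ / α)) := by
        rw [hsplitpow, hB]
        calc 4 * α * ξ⁻¹ * (s ^ (2-2*α) * s ^ (α-1) * Real.exp (2 * s ^ α * ξ / α))
            ≤ 4 * α * ξ⁻¹ * (z ^ (2-2*α) * s ^ (α-1) * Real.exp (2 * s ^ α * ξ / α)) := by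
              apply mul_le_mul_of_nonneg_left ?_ (by positivity)
              exact mul_le_mul_of_nonneg_right
                (mul_le_mul_of_nonneg_right hzle hsm1.le) hexp.le
          _ = 4 * α * ξ⁻¹ * z ^ (2-2*α) * (s ^ (α-1) * Real.exp (2 * s ^ α * ξ / α)) := by
              ring
      calc s * besselI0 t ^ 2 ≤ B * (s ^ (α-1) * Real.exp (2 * s ^ α * ξ / α)) := by
            rw [step2] at step1; exact step1.trans step3
        _ ≤ g s := by simp only [hg]; nlinarith [mul_pos (Real.exp_pos 2) hsstar0]
  -- integrability of the majorant on Ioc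
  have hcon : ContinuousOn (fun s : ℝ => s ^ (α-1) * Real.exp (2 * s ^ α * ξ / α))
      (Set.Ioc (0:ℝ) z) := by
    intro x hx
    have hx0 : x ≠ 0 := ne_of_gt hx.1
    apply ContinuousAt.continuousWithinAt
    have h1 : ContinuousAt (fun s:ℝ => s ^ (α-1)) x :=
      Real.continuousAt_rpow_const x _ (Or.inl hx0)
    have h2 : ContinuousAt (fun s:ℝ => s ^ α) x :=
      Real.continuousAt_rpow_const x _ (Or.inl hx0)
    exact h1.mul (Real.continuous_exp.continuousAt.comp
      (((h2.const_mul 2).mul_const ξ).div_const α))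
  have hhIoc : IntegrableOn (fun s : ℝ => s ^ (α-1) * Real.exp (2 * s ^ α * ξ / α))
      (Set.Ioc 0 z) := by
    have hmaj : IntegrableOn (fun s : ℝ => Real.exp (2 * z ^ α * ξ / α) * s ^ (α-1))
        (Set.Ioc 0 z) := by
      have h0 : IntervalIntegrable (fun s : ℝ => s ^ (α-1)) volume 0 z :=
        intervalIntegral.intervalIntegrable_rpow' (by linarith)
      rw [intervalIntegrable_iff_integrableOn_Ioc_of_le hz0.le] at h0
      exact h0.const_mul _
    apply Integrable.mono' hmaj (hcon.aestronglyMeasurable measurableSet_Ioc)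
    filter_upwards [ae_restrict_mem measurableSet_Ioc] with s hs
    have hs0 : 0 < s := hs.1
    have h1 : (0:ℝ) < s ^ (α-1) := Real.rpow_pos_of_pos hs0 _
    have h2 : Real.exp (2 * s ^ α * ξ / α) ≤ Real.exp (2 * z ^ α * ξ / α) := by
      gcongr
      exact hs.2
    rw [Real.norm_eq_abs, abs_of_nonneg (by positivity)]
    calc s ^ (α-1) * Real.exp (2 * s ^ α * ξ / α)
        ≤ s ^ (α-1) * Real.exp (2 * z ^ α * ξ / α) := mul_le_mul_of_nonneg_left h2 h1.le
      _ = Real.exp (2 * z ^ α * ξ / α) * s ^ (α-1) := by ring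
  have hconst : IntegrableOn (fun _ : ℝ => Real.exp 2 * sstar) (Set.Ioo (0:ℝ) z) :=
    integrableOn_const measure_Ioo_lt_top.ne
  have hBh : IntegrableOn
      (fun s : ℝ => B * (s ^ (α-1) * Real.exp (2 * s ^ α * ξ / α))) (Set.Ioo (0:ℝ) z) :=
    (hhIoc.mono_set Set.Ioo_subset_Ioc_self).const_mul B
  have hgint : IntegrableOn g (Set.Ioo (0:ℝ) z) := hconst.add hBh
  -- integral comparison
  have hmono : (∫ s in Set.Ioo (0:ℝ) z, s * (besselI0 ((s * β) ^ α / α)) ^ 2)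
      ≤ ∫ s in Set.Ioo (0:ℝ) z, g s := by
    apply integral_mono_of_nonneg
    · filter_upwards [ae_restrict_mem measurableSet_Ioo] with s hs
      exact mul_nonneg hs.1.le (sq_nonneg _)
    · exact hgint
    · filter_upwards [ae_restrict_mem measurableSet_Ioo] with s hs
      exact hfg s hs
  -- compute integral of g
  have hFTC : (∫ s in (0:ℝ)..z, s ^ (α-1) * Real.exp (2 * s ^ α * ξ / α))
      = Real.exp (2 * z ^ α * ξ / α) / (2*ξ)
        - Real.exp (2 * (0:ℝ) ^ α * ξ / α) / (2*ξ) := by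
    apply intervalIntegral.integral_eq_sub_of_hasDerivAt_of_le hz0.le
      (f := fun s => Real.exp (2 * s ^ α * ξ / α) / (2*ξ))
    · have hc : Continuous fun s : ℝ => s ^ α :=
        continuous_iff_continuousAt.2 fun x => Real.continuousAt_rpow_const x α (Or.inr hα0.le)
      exact ((Real.continuous_exp.comp
        ((((continuous_const.mul hc).mul continuous_const)).div_const α)).div_const
        (2*ξ)).continuousOn
    · intro x hx
      have hx0 : x ≠ 0 := ne_of_gt hx.1
      have hd : HasDerivAt (fun s : ℝ => s ^ α) (α * x ^ (α-1)) x :=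
        Real.hasDerivAt_rpow_const (Or.inl hx0)
      have h2 : HasDerivAt (fun s : ℝ => 2 * s ^ α * ξ / α)
          (2 * (α * x ^ (α-1)) * ξ / α) x := ((hd.const_mul 2).mul_const ξ).div_const α
      have h3 := (h2.exp).div_const (2*ξ)
      refine h3.congr_deriv ?_
      field_simp
    · exact (intervalIntegrable_iff_integrableOn_Ioc_of_le hz0.le).2 hhIoc
  have hgval : (∫ s in Set.Ioo (0:ℝ) z, g s)
      = Real.exp 2 * sstar * z + B * ((E - 1) / (2*ξ)) := by
    simp only [hg]
    rw [integral_add hconst hBh]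
    congr 1
    · rw [setIntegral_const, Real.volume_real_Ioo_of_le hz0.le, smul_eq_mul]
      ring
    · rw [integral_const_mul]
      congr 1
      rw [← integral_Ioc_eq_integral_Ioo, ← intervalIntegral.integral_of_le hz0.le, hFTC,
        Real.zero_rpow hα0.ne', hE]
      rw [show 2 * (0:ℝ) * ξ / α = 0 by ring, Real.exp_zero]
      ring
  -- final arithmetic
  have hξ2 : ξ ^ (-(2:ℝ)) = (ξ^2)⁻¹ := by
    rw [Real.rpow_neg hξ.le, show (2:ℝ) = ((2:ℕ):ℝ) by norm_num, Real.rpow_natCast]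
  have hQ0 : 0 < z ^ (2 - 2*α) * ξ ^ (-(2:ℝ)) := by rw [hξ2]; positivity
  have hBE : B * ((E - 1) / (2*ξ)) ≤ 2*α * (z ^ (2 - 2*α) * ξ ^ (-(2:ℝ))) * E := by
    have h1 : B * ((E - 1) / (2*ξ)) ≤ B * (E / (2*ξ)) := by
      apply mul_le_mul_of_nonneg_left _ hB0.le
      apply div_le_div_of_nonneg_right (by linarith) (by positivity)
    have h2 : B * (E / (2*ξ)) = 2*α * (z ^ (2 - 2*α) * ξ ^ (-(2:ℝ))) * E := by
      rw [hB, hξ2]; field_simp; ring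
    linarith
  have hsz : sstar * z ≤ α ^ ((1:ℝ)/α) * (z ^ (2 - 2*α) * ξ ^ (-(2:ℝ))) := by
    have hsseq : sstar = α ^ ((1:ℝ)/α) * ξ ^ (-(1:ℝ)/α) := by
      rw [hsstar, div_eq_mul_inv, Real.mul_rpow hα0.le (inv_nonneg.2 hξ.le),
        ← Real.rpow_neg_one ξ, ← Real.rpow_mul hξ.le,
        show (-1:ℝ)*((1:ℝ)/α) = -(1:ℝ)/α by ring]
    have hzp1 : ξ ^ ((-(1:ℝ)/α) * (1-2*α)) ≤ z ^ (1-2*α) := by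
      rw [Real.rpow_mul hξ.le]
      exact Real.rpow_le_rpow (Real.rpow_pos_of_pos hξ _).le hz (by linarith)
    have hsplit2 : ξ ^ ((-(1:ℝ)/α) * (1-2*α)) = ξ ^ (-(1:ℝ)/α) * ξ^(2:ℝ) := by
      rw [← Real.rpow_add hξ]
      congr 1
      field_simp
      ring
    have hξ2' : ξ ^ (2:ℝ) = ξ^2 := by
      rw [show (2:ℝ) = ((2:ℕ):ℝ) by norm_num, Real.rpow_natCast]
    have hzz : z * z ^ (1-2*α) = z ^ (2-2*α) := by
      have h := Real.rpow_add hz0 1 (1-2*α)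
      rw [Real.rpow_one] at h
      rw [← h]; congr 1; ring
    have hξsq : (0:ℝ) < ξ^2 := by positivity
    have hkey2 : ξ ^ (-(1:ℝ)/α) ≤ z ^ (1-2*α) * (ξ^2)⁻¹ := by
      rw [hsplit2, hξ2'] at hzp1
      rw [← div_eq_mul_inv, le_div_iff₀ hξsq]
      exact hzp1
    calc sstar * z = α ^ ((1:ℝ)/α) * (ξ ^ (-(1:ℝ)/α) * z) := by rw [hsseq]; ring
      _ ≤ α ^ ((1:ℝ)/α) * (z ^ (1-2*α) * (ξ^2)⁻¹ * z) := by
          apply mul_le_mul_of_nonneg_left _ hA1.le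
          exact mul_le_mul_of_nonneg_right hkey2 hz0.le
      _ = α ^ ((1:ℝ)/α) * (z ^ (2 - 2*α) * ξ ^ (-(2:ℝ))) := by
          rw [hξ2, ← hzz]; ring

  calc (∫ s in Set.Ioo (0:ℝ) z, s * (besselI0 ((s * β) ^ α / α)) ^ 2)
      ≤ Real.exp 2 * sstar * z + B * ((E - 1) / (2*ξ)) := by rw [← hgval]; exact hmono
    _ ≤ (Real.exp 2 * α ^ ((1:ℝ)/α) + 2 * α) * z ^ (2 - 2*α) * ξ ^ (-(2:ℝ)) * E := by
        nlinarith [mul_le_mul_of_nonneg_left hsz (Real.exp_pos 2).le,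
          mul_pos (mul_pos (Real.exp_pos 2) hA1) hQ0, hE1, hQ0]
end

section
/- Let L be a symmetric operator on a Hilbert space H defined on C_0^∞(Ω), associated to a nonnegative closable form b, with energy space E (the maximal form domain) and E_0 the closure of C_0^∞(Ω) in E. Then L has exactly one self-adjoint extension with domain contained in E if and only if E_0 = E. -/
open Filter
open scoped RealInnerProductSpace LinearPMap
set_option linter.unusedSectionVars false
set_option linter.unusedVariables false
set_option maxHeartbeats 1000000

noncomputable section Stmt15Aux
namespace Stmt15

section Criterion
variable {H : Type*} [NormedAddCommGroup H] [InnerProductSpace ℝ H] [CompleteSpace H]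

/-- A symmetric operator such that `T + 1` is surjective is self-adjoint. -/
theorem isSelfAdjoint_of_symm_surj (T : H →ₗ.[ℝ] H) (hd : Dense (T.domain : Set H))
    (hs : T.IsFormalAdjoint T)
    (hsurj : ∀ f : H, ∃ u : T.domain, T u + (u : H) = f) : IsSelfAdjoint T := by
  rw [LinearPMap.isSelfAdjoint_def]
  have hle : T ≤ T.adjoint := hs.le_adjoint hd
  have hfa := LinearPMap.adjoint_isFormalAdjoint hd
  refine (LinearPMap.eq_of_le_of_domain_eq hle (le_antisymm hle.1 ?_)).symm
  intro w hw
  obtain ⟨u, hu⟩ := hsurj (T.adjoint ⟨w, hw⟩ + w)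
  have hwu : w = (u : H) := by
    refine ext_inner_left ℝ fun v => ?_
    obtain ⟨p, hp⟩ := hsurj v
    have h1 : ⟪T p, w⟫ = ⟪(p : H), T.adjoint ⟨w, hw⟩⟫ := by
      rw [real_inner_comm]
      rw [show (⟪w, T p⟫ : ℝ) =
        ⟪((⟨w, hw⟩ : T.adjoint.domain) : H), T p⟫ from rfl]
      rw [← hfa ⟨w, hw⟩ p, real_inner_comm]
    calc ⟪v, w⟫ = ⟪T p + (p : H), w⟫ := by rw [hp]
    _ = ⟪T p, w⟫ + ⟪(p : H), w⟫ := inner_add_left _ _ _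
    _ = ⟪(p : H), T.adjoint ⟨w, hw⟩ + w⟫ := by rw [h1, inner_add_right]
    _ = ⟪(p : H), T u + (u : H)⟫ := by rw [hu]
    _ = ⟪T p, (u : H)⟫ + ⟪(p : H), (u : H)⟫ := by
        rw [inner_add_right, ← hs p u]
    _ = ⟪T p + (p : H), (u : H)⟫ := (inner_add_left _ _ _).symm
    _ = ⟪v, (u : H)⟫ := by rw [hp]
  rw [hwu]
  exact u.2

theorem adjoint_le_adjoint {S T : H →ₗ.[ℝ] H} (hS : Dense (S.domain : Set H))
    (hT : Dense (T.domain : Set H)) (h : S ≤ T) : T.adjoint ≤ S.adjoint := by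
  have hfa := LinearPMap.adjoint_isFormalAdjoint hT
  refine LinearPMap.IsFormalAdjoint.le_adjoint hS ?_
  intro x y
  have hx' : (x : H) ∈ T.domain := h.1 x.2
  have hSx : S x = T ⟨x, hx'⟩ := h.2 rfl
  rw [hSx, real_inner_comm, ← hfa y ⟨(x : H), hx'⟩]
  exact real_inner_comm _ _

end Criterion

section Assoc
variable {W H : Type*} [NormedAddCommGroup W] [InnerProductSpace ℝ W] [CompleteSpace W]
  [NormedAddCommGroup H] [InnerProductSpace ℝ H] [CompleteSpace H]

/-- The "Riesz" map `G : H → W`, `⟪G f, v⟫_W = ⟪f, ι v⟫_H`. -/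
def rieszG (ι : W →L[ℝ] H) : H →ₗ[ℝ] W where
  toFun f := (InnerProductSpace.toDual ℝ W).symm ((innerSL ℝ f).comp ι)
  map_add' f g := ext_inner_right ℝ fun v => by
    simp [InnerProductSpace.toDual_symm_apply, inner_add_left]
  map_smul' r f := ext_inner_right ℝ fun v => by
    simp [InnerProductSpace.toDual_symm_apply, inner_smul_left, real_inner_smul_left]

theorem inner_rieszG (ι : W →L[ℝ] H) (f : H) (v : W) :
    ⟪rieszG ι f, v⟫ = ⟪f, ι v⟫ := by
  simp [rieszG, InnerProductSpace.toDual_symm_apply]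

variable (ι : W →L[ℝ] H)

theorem rieszG_injective (hdr : DenseRange ι) : Function.Injective (rieszG ι) := by
  intro f g h
  have hz : ∀ v : W, ⟪f - g, ι v⟫ = 0 := fun v => by
    rw [inner_sub_left, ← inner_rieszG ι f v, ← inner_rieszG ι g v, h, sub_self]
  have hd : Dense ((LinearMap.range (ι : W →ₗ[ℝ] H) : Submodule ℝ H) : Set H) := by
    simpa [LinearMap.coe_range, DenseRange] using hdr
  have : f - g = 0 := hd.eq_zero_of_inner_left ℝ (by rintro _ ⟨v, rfl⟩; exact hz v)
  exact sub_eq_zero.mp this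

/-- The range of the Riesz map is dense in `W` (if `ι` is injective). -/
theorem rieszG_range_dense (hinj : Function.Injective ι) :
    Dense ((LinearMap.range (rieszG ι) : Submodule ℝ W) : Set W) := by
  rw [Submodule.dense_iff_topologicalClosure_eq_top,
    Submodule.topologicalClosure_eq_top_iff]
  rw [Submodule.eq_bot_iff]
  intro v hv
  have h1 : ⟪rieszG ι (ι v), v⟫ = 0 := hv _ (LinearMap.mem_range_self _ _)
  rw [inner_rieszG] at h1
  exact hinj (by simpa using inner_self_eq_zero.mp h1)

/-- `K = ι ∘ G : H → H`. -/
def kmap : H →ₗ[ℝ] H := (ι : W →ₗ[ℝ] H).comp (rieszG ι)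

theorem kmap_apply (f : H) : kmap ι f = ι (rieszG ι f) := rfl

variable (hK : Function.Injective (kmap ι))

/-- The self-adjoint operator associated with the Hilbert space `W` mapping into `H`. -/
def assocOp : H →ₗ.[ℝ] H :=
  ⟨LinearMap.range (kmap ι),
    (LinearEquiv.ofInjective (kmap ι) hK).symm.toLinearMap -
      (LinearMap.range (kmap ι)).subtype⟩

theorem assocOp_domain : (assocOp ι hK).domain = LinearMap.range (kmap ι) := rfl

theorem assocOp_apply (f : H) :
    assocOp ι hK ⟨kmap ι f, LinearMap.mem_range_self _ f⟩ = f - kmap ι f := by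
  have h1 : (⟨kmap ι f, LinearMap.mem_range_self _ f⟩ :
      LinearMap.range (kmap ι)) = LinearEquiv.ofInjective (kmap ι) hK f := rfl
  show (LinearEquiv.ofInjective (kmap ι) hK).symm.toLinearMap _ -
      (LinearMap.range (kmap ι)).subtype _ = _
  erw [h1]
  simp

/-- Membership criterion for the domain of `assocOp`. -/
theorem assocOp_mem (hdr : DenseRange ι) (x₀ f₀ : H) (w₀ : W) (hw : ι w₀ = x₀)
    (hf : ∀ v : W, ⟪f₀, ι v⟫ = ⟪w₀, v⟫) :
    ∃ hx : x₀ ∈ (assocOp ι hK).domain, assocOp ι hK ⟨x₀, hx⟩ = f₀ - x₀ := by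
  have hG : rieszG ι f₀ = w₀ := ext_inner_right ℝ fun v => by
    rw [inner_rieszG]; exact hf v
  have hk : kmap ι f₀ = x₀ := by rw [kmap_apply, hG, hw]
  subst hk
  exact ⟨LinearMap.mem_range_self _ f₀, assocOp_apply ι hK f₀⟩

/-- The inverse characterization: every element of the domain comes from the Riesz map. -/
theorem assocOp_spec (u : (assocOp ι hK).domain) :
    ∃ w : W, ι w = (u : H) ∧ ∀ v : W, ⟪assocOp ι hK u + (u : H), ι v⟫ = ⟪w, v⟫ := by
  obtain ⟨f, hf⟩ := u.2
  refine ⟨rieszG ι f, by rw [← kmap_apply, hf], fun v => ?_⟩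
  have hu : u = ⟨kmap ι f, LinearMap.mem_range_self _ f⟩ := Subtype.ext hf.symm
  rw [hu, assocOp_apply]
  show ⟪f - kmap ι f + kmap ι f, ι v⟫ = _
  rw [sub_add_cancel, inner_rieszG]
theorem assocOp_symm : (assocOp ι hK).IsFormalAdjoint (assocOp ι hK) := by
  intro x y
  obtain ⟨wx, hwx, hfx⟩ := assocOp_spec ι hK x
  obtain ⟨wy, hwy, hfy⟩ := assocOp_spec ι hK y
  have hx : (⟪assocOp ι hK x, (y : H)⟫ : ℝ) = ⟪wx, wy⟫ - ⟪(x : H), (y : H)⟫ := by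
    have := hfx wy
    rw [hwy] at this
    rw [inner_add_left] at this
    linarith
  have hy : (⟪assocOp ι hK y, (x : H)⟫ : ℝ) = ⟪wy, wx⟫ - ⟪(y : H), (x : H)⟫ := by
    have := hfy wx
    rw [hwx] at this
    rw [inner_add_left] at this
    linarith
  have c1 : (⟪(x : H), assocOp ι hK y⟫ : ℝ) = ⟪assocOp ι hK y, (x : H)⟫ :=
    real_inner_comm _ _
  have c2 : (⟪wx, wy⟫ : ℝ) = ⟪wy, wx⟫ := real_inner_comm _ _
  have c3 : (⟪(x : H), (y : H)⟫ : ℝ) = ⟪(y : H), (x : H)⟫ := real_inner_comm _ _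
  rw [hx]
  linarith

theorem assocOp_surj (f : H) : ∃ u : (assocOp ι hK).domain,
    assocOp ι hK u + (u : H) = f := by
  refine ⟨⟨kmap ι f, LinearMap.mem_range_self _ f⟩, ?_⟩
  rw [assocOp_apply]
  simp

theorem assocOp_dense_domain (hdr : DenseRange ι) :
    Dense ((assocOp ι hK).domain : Set H) := by
  rw [assocOp_domain, Submodule.dense_iff_topologicalClosure_eq_top,
    Submodule.topologicalClosure_eq_top_iff, Submodule.eq_bot_iff]
  intro g hg
  have h1 : ⟪kmap ι g, g⟫ = 0 := hg _ (LinearMap.mem_range_self _ _)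
  have h2 : (⟪rieszG ι g, rieszG ι g⟫ : ℝ) = 0 := by
    rw [inner_rieszG, ← kmap_apply, real_inner_comm, h1]
  have h3 : rieszG ι g = 0 := inner_self_eq_zero.mp h2
  have h4 : rieszG ι g = rieszG ι 0 := by rw [h3, map_zero]
  exact rieszG_injective ι hdr h4

theorem assocOp_isSelfAdjoint (hdr : DenseRange ι) : IsSelfAdjoint (assocOp ι hK) :=
  isSelfAdjoint_of_symm_surj _ (assocOp_dense_domain ι hK hdr)
    (assocOp_symm ι hK) (assocOp_surj ι hK)

theorem le_assocOp (hdr : DenseRange ι) (S : H →ₗ.[ℝ] H)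
    (h : ∀ x : S.domain, ∃ w : W, ι w = (x : H) ∧
      ∀ v : W, ⟪S x + (x : H), ι v⟫ = ⟪w, v⟫) :
    S ≤ assocOp ι hK := by
  have hmem : ∀ x : S.domain, (x : H) ∈ (assocOp ι hK).domain := by
    intro x
    obtain ⟨w, hw, hf⟩ := h x
    exact (assocOp_mem ι hK hdr (x : H) (S x + (x : H)) w hw hf).1
  refine ⟨fun x hx => hmem ⟨x, hx⟩, ?_⟩
  intro x y hxy
  obtain ⟨w, hw, hf⟩ := h x
  obtain ⟨hx', happ⟩ := assocOp_mem ι hK hdr (x : H) (S x + (x : H)) w hw hf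
  have hy : y = ⟨(x : H), hx'⟩ := Subtype.ext hxy.symm
  rw [hy, happ]
  abel

theorem assocOp_domain_subset (u : H) (hu : u ∈ (assocOp ι hK).domain) :
    ∃ w : W, ι w = u := by
  obtain ⟨f, hf⟩ := hu
  exact ⟨rieszG ι f, hf⟩

end Assoc

variable {H : Type*} [NormedAddCommGroup H] [InnerProductSpace ℝ H]

/-- Type synonym for `E` carrying the form (inner product) structure. -/
@[nolint unusedArguments]
def ES (E : Submodule ℝ H) (B : E →ₗ[ℝ] E →ₗ[ℝ] ℝ) : Type _ := E

variable (E : Submodule ℝ H) (B : E →ₗ[ℝ] E →ₗ[ℝ] ℝ)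

instance : AddCommGroup (ES E B) := inferInstanceAs (AddCommGroup E)
instance : Module ℝ (ES E B) := inferInstanceAs (Module ℝ E)

def mkES : E →ₗ[ℝ] ES E B := LinearMap.id (R := ℝ) (M := E)
def unES : ES E B →ₗ[ℝ] E := LinearMap.id (R := ℝ) (M := E)

open Classical in
def esInner (x y : ES E B) : ℝ :=
  if (∀ a b : E, B a b = B b a) ∧ (∀ a : E, 0 ≤ B a a)
  then B (unES E B x) (unES E B y) +
    ⟪((unES E B x : E) : H), ((unES E B y : E) : H)⟫
  else ⟪((unES E B x : E) : H), ((unES E B y : E) : H)⟫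

def esCore : InnerProductSpace.Core ℝ (ES E B) where
  inner := esInner E B
  conj_inner_symm x y := by
    simp only [esInner, starRingEnd_apply, star_trivial, RCLike.inner_apply]
    split_ifs with h
    · rw [h.1 (unES E B y) (unES E B x), real_inner_comm]
    · rw [real_inner_comm]
  re_inner_nonneg x := by
    simp only [esInner, RCLike.re_to_real]
    split_ifs with h
    · exact add_nonneg (h.2 _) real_inner_self_nonneg
    · exact real_inner_self_nonneg
  definite x hx := by
    simp only [esInner] at hx
    split_ifs at hx with h
    · have h1 : (⟪((unES E B x : E) : H), ((unES E B x : E) : H)⟫ : ℝ) = 0 := by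
        have := h.2 (unES E B x)
        have := real_inner_self_nonneg (x := ((unES E B x : E) : H))
        linarith
      have h2 : ((unES E B x : E) : H) = 0 := inner_self_eq_zero.mp h1
      exact Subtype.ext h2
    · exact Subtype.ext (inner_self_eq_zero.mp hx)
  add_left x y z := by
    simp only [esInner]
    split_ifs with h
    · simp only [map_add, LinearMap.add_apply, Submodule.coe_add, inner_add_left]
      ring
    · simp only [map_add, Submodule.coe_add, inner_add_left]
  smul_left x y r := by
    simp only [esInner, starRingEnd_apply, star_trivial]
    split_ifs with h
    · simp only [map_smul, LinearMap.smul_apply, smul_eq_mul, Submodule.coe_smul,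
        real_inner_smul_left]
      ring
    · simp only [map_smul, Submodule.coe_smul, real_inner_smul_left]

instance : NormedAddCommGroup (ES E B) :=
  @InnerProductSpace.Core.toNormedAddCommGroup ℝ (ES E B) _ _ _ (esCore E B)
instance : InnerProductSpace ℝ (ES E B) := InnerProductSpace.ofCore (esCore E B).toCore

variable (hBsymm : ∀ a b : E, B a b = B b a) (hBnn : ∀ a : E, 0 ≤ B a a)

include hBsymm hBnn

theorem esInner_eq (x y : ES E B) :
    (⟪x, y⟫ : ℝ) = B (unES E B x) (unES E B y) +
      ⟪((unES E B x : E) : H), ((unES E B y : E) : H)⟫ := by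
  show esInner E B x y = _
  rw [esInner, if_pos ⟨hBsymm, hBnn⟩]

theorem esNorm_sq (x : ES E B) :
    ‖x‖ ^ 2 = B (unES E B x) (unES E B x) + ‖((unES E B x : E) : H)‖ ^ 2 := by
  rw [← real_inner_self_eq_norm_sq, esInner_eq E B hBsymm hBnn,
    real_inner_self_eq_norm_sq]

theorem es_norm_le (x : ES E B) : ‖((unES E B x : E) : H)‖ ≤ ‖x‖ := by
  have h1 := esNorm_sq E B hBsymm hBnn x
  have h2 := hBnn (unES E B x)
  have h3 : ‖((unES E B x : E) : H)‖ ^ 2 ≤ ‖x‖ ^ 2 := by linarith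
  have := Real.sqrt_le_sqrt h3
  rwa [Real.sqrt_sq (norm_nonneg _), Real.sqrt_sq (norm_nonneg _)] at this

/-- Inclusion of the energy space into `H`. -/
def esι : ES E B →L[ℝ] H :=
  LinearMap.mkContinuous (E.subtype.comp (unES E B)) 1 fun x => by
    rw [one_mul]
    exact es_norm_le E B hBsymm hBnn x

theorem esι_apply (x : ES E B) : esι E B hBsymm hBnn x = ((unES E B x : E) : H) := rfl

theorem esι_injective : Function.Injective (esι E B hBsymm hBnn) := by
  intro x y h
  exact Subtype.ext h

theorem es_completeSpace
    (hclosed : ∀ u : ℕ → E,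
      (∀ ε > (0 : ℝ), ∃ N, ∀ m ≥ N, ∀ k ≥ N,
        B (u m - u k) (u m - u k) + ‖((u m - u k : E) : H)‖ ^ 2 < ε) →
      ∃ x : E, Tendsto (fun m => B (u m - x) (u m - x) + ‖((u m - x : E) : H)‖ ^ 2)
        atTop (nhds 0)) : CompleteSpace (ES E B) := by
  apply Metric.complete_of_cauchySeq_tendsto
  intro u hu
  rw [Metric.cauchySeq_iff] at hu
  have hcau : ∀ ε > (0 : ℝ), ∃ N, ∀ m ≥ N, ∀ k ≥ N,
      B ((fun n => unES E B (u n)) m - (fun n => unES E B (u n)) k)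
        ((fun n => unES E B (u n)) m - (fun n => unES E B (u n)) k) +
      ‖(((fun n => unES E B (u n)) m - (fun n => unES E B (u n)) k : E) : H)‖ ^ 2 < ε := by
    intro ε hε
    obtain ⟨N, hN⟩ := hu (Real.sqrt ε) (Real.sqrt_pos.mpr hε)
    refine ⟨N, fun m hm k hk => ?_⟩
    have h1 : dist (u m) (u k) < Real.sqrt ε := hN m hm k hk
    have h2 : ‖u m - u k‖ < Real.sqrt ε := by rwa [dist_eq_norm] at h1
    have h3 : ‖u m - u k‖ ^ 2 < ε := by
      have hs : Real.sqrt ε * Real.sqrt ε = ε := Real.mul_self_sqrt hε.le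
      nlinarith [norm_nonneg (u m - u k)]
    calc B (unES E B (u m) - unES E B (u k)) (unES E B (u m) - unES E B (u k)) +
        ‖((unES E B (u m) - unES E B (u k) : E) : H)‖ ^ 2
        = ‖u m - u k‖ ^ 2 := by
          rw [esNorm_sq E B hBsymm hBnn (u m - u k)]
          rfl
      _ < ε := h3
  obtain ⟨x, hx⟩ := hclosed (fun n => unES E B (u n)) hcau
  refine ⟨mkES E B x, ?_⟩
  rw [tendsto_iff_norm_sub_tendsto_zero]
  have hsq : Tendsto (fun m => ‖u m - mkES E B x‖ ^ 2) atTop (nhds 0) := by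
    convert hx using 2 with m
    exact esNorm_sq E B hBsymm hBnn (u m - mkES E B x)
  have h0 := (Real.continuous_sqrt.tendsto 0).comp hsq
  rw [Real.sqrt_zero] at h0
  have heq : (fun m => ‖u m - mkES E B x‖) =
      (Real.sqrt ∘ fun m => ‖u m - mkES E B x‖ ^ 2) :=
    funext fun m => (Real.sqrt_sq (norm_nonneg _)).symm
  rw [heq]
  exact h0


end Stmt15

end Stmt15Aux

open Stmt15

/-- Abstract characterization of the alternative well-posedness property: a densely defined
symmetric nonnegative operator `L` on a Hilbert space `H`, associated with a closed
nonnegative symmetric form `B` with (maximal) form domain `E`, has exactly one self-adjoint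
extension with domain contained in `E` if and only if `E₀ = E`, where `E₀` is the closure
of the test functions (the domain of `L`) in `E` for the form norm. -/
theorem stmt15 {H : Type*} [NormedAddCommGroup H] [InnerProductSpace ℝ H] [CompleteSpace H]
    (L : H →ₗ.[ℝ] H) (hdense : Dense (L.domain : Set H))
    (hsymm : ∀ x y : L.domain, ⟪L x, (y : H)⟫ = ⟪(x : H), L y⟫)
    (hnn : ∀ x : L.domain, 0 ≤ ⟪L x, (x : H)⟫)
    (E : Submodule ℝ H) (hDE : L.domain ≤ E)
    (B : E →ₗ[ℝ] E →ₗ[ℝ] ℝ)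
    (hBsymm : ∀ x y : E, B x y = B y x) (hBnn : ∀ x : E, 0 ≤ B x x)
    (hBagree : ∀ (x : L.domain) (y : E), B ⟨(x : H), hDE x.2⟩ y = ⟪L x, (y : H)⟫)
    -- the form is closed: `E` is complete for the form norm `√(B x x + ‖x‖²)`
    (hclosed : ∀ u : ℕ → E,
      (∀ ε > (0 : ℝ), ∃ N, ∀ m ≥ N, ∀ k ≥ N,
        B (u m - u k) (u m - u k) + ‖((u m - u k : E) : H)‖ ^ 2 < ε) →
      ∃ x : E, Tendsto (fun m => B (u m - x) (u m - x) + ‖((u m - x : E) : H)‖ ^ 2)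
        atTop (nhds 0)) :
    (∃! T : H →ₗ.[ℝ] H, L ≤ T ∧ IsSelfAdjoint T ∧ (T.domain : Set H) ⊆ (E : Set H)) ↔
    (∀ x : E, ∀ ε > (0 : ℝ), ∃ y : L.domain,
      B (x - ⟨(y : H), hDE y.2⟩) (x - ⟨(y : H), hDE y.2⟩) + ‖(x : H) - (y : H)‖ ^ 2 < ε) := by
  classical
  haveI hCS : CompleteSpace (ES E B) := es_completeSpace E B hBsymm hBnn hclosed
  -- the inclusion of the full energy space
  set ι₁ : ES E B →L[ℝ] H := esι E B hBsymm hBnn with hι₁def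
  have hinj₁ : Function.Injective ι₁ := esι_injective E B hBsymm hBnn
  have hdr₁ : DenseRange ι₁ := by
    have hr₁ : Set.range ι₁ ⊇ (L.domain : Set H) := by
      intro z hz
      exact ⟨mkES E B ⟨z, hDE hz⟩, rfl⟩
    exact hdense.mono hr₁
  have hK₁ : Function.Injective (kmap ι₁) := fun a b h =>
    rieszG_injective ι₁ hdr₁ (hinj₁ h)
  -- the closure of (the image of) `L.domain` in the energy space, and its inclusion
  set D₀ : Submodule ℝ (ES E B) :=
    Submodule.comap (E.subtype.comp (unES E B)) L.domain with hD₀def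
  have hD₀mem : ∀ v : ES E B, v ∈ D₀ ↔ ((unES E B v : E) : H) ∈ L.domain :=
    fun v => Iff.rfl
  set W₀ : Submodule ℝ (ES E B) := D₀.topologicalClosure with hW₀def
  haveI hW₀c : CompleteSpace W₀ :=
    (Submodule.isClosed_topologicalClosure D₀).completeSpace_coe
  set ι₀ : W₀ →L[ℝ] H := ι₁.comp W₀.subtypeL with hι₀def
  have hinj₀ : Function.Injective ι₀ := fun a b h =>
    Subtype.ext (hinj₁ h)
  have hdr₀ : DenseRange ι₀ := by
    have hr₀ : Set.range ι₀ ⊇ (L.domain : Set H) := by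
      intro z hz
      refine ⟨⟨mkES E B ⟨z, hDE hz⟩, D₀.le_topologicalClosure ?_⟩, rfl⟩
      exact (hD₀mem _).mpr hz
    exact hdense.mono hr₀
  have hK₀ : Function.Injective (kmap ι₀) := fun a b h =>
    rieszG_injective ι₀ hdr₀ (hinj₀ h)
  -- the two extensions
  set T₁ : H →ₗ.[ℝ] H := assocOp ι₁ hK₁ with hT₁def
  set T₀ : H →ₗ.[ℝ] H := assocOp ι₀ hK₀ with hT₀def
  have hsa₁ : IsSelfAdjoint T₁ := assocOp_isSelfAdjoint ι₁ hK₁ hdr₁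
  have hsa₀ : IsSelfAdjoint T₀ := assocOp_isSelfAdjoint ι₀ hK₀ hdr₀
  have hsub₁ : (T₁.domain : Set H) ⊆ (E : Set H) := by
    intro u hu
    obtain ⟨w, hw⟩ := assocOp_domain_subset ι₁ hK₁ u hu
    rw [← hw]
    exact (unES E B w).2
  have hsub₀ : (T₀.domain : Set H) ⊆ (E : Set H) := by
    intro u hu
    obtain ⟨w, hw⟩ := assocOp_domain_subset ι₀ hK₀ u hu
    rw [← hw]
    exact (unES E B ((w : W₀) : ES E B)).2
  have hLT₁ : L ≤ T₁ := by
    refine le_assocOp ι₁ hK₁ hdr₁ L fun x => ?_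
    refine ⟨mkES E B ⟨(x : H), hDE x.2⟩, rfl, fun v => ?_⟩
    rw [esInner_eq E B hBsymm hBnn, inner_add_left]
    have hB := hBagree x (unES E B v)
    have h1 : (⟪L x, ι₁ v⟫ : ℝ) = B ⟨(x : H), hDE x.2⟩ (unES E B v) := hB.symm
    rw [h1]
    rfl
  have hLT₀ : L ≤ T₀ := by
    refine le_assocOp ι₀ hK₀ hdr₀ L fun x => ?_
    refine ⟨⟨mkES E B ⟨(x : H), hDE x.2⟩,
      D₀.le_topologicalClosure ((hD₀mem _).mpr x.2)⟩, rfl, fun v => ?_⟩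
    rw [Submodule.coe_inner, esInner_eq E B hBsymm hBnn, inner_add_left]
    have hB := hBagree x (unES E B ((v : W₀) : ES E B))
    have h1 : (⟪L x, ι₀ v⟫ : ℝ) =
        B ⟨(x : H), hDE x.2⟩ (unES E B ((v : W₀) : ES E B)) := hB.symm
    rw [h1]
    rfl
  constructor
  · -- uniqueness implies density
    rintro ⟨T, hT, hTuniq⟩
    have e1 : T₁ = T := hTuniq T₁ ⟨hLT₁, hsa₁, hsub₁⟩
    have e0 : T₀ = T := hTuniq T₀ ⟨hLT₀, hsa₀, hsub₀⟩
    have e : T₁ = T₀ := e1.trans e0.symm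
    -- hence the range of the Riesz map for `ι₁` lies in `W₀`
    have hsub : (LinearMap.range (rieszG ι₁) : Submodule ℝ (ES E B)) ≤ W₀ := by
      rintro _ ⟨f, rfl⟩
      have hmem : kmap ι₁ f ∈ T₁.domain := LinearMap.mem_range_self _ f
      rw [e] at hmem
      obtain ⟨g, hg⟩ := hmem
      have hι : ι₁ ((rieszG ι₀ g : W₀) : ES E B) = ι₁ (rieszG ι₁ f) := hg
      have := hinj₁ hι
      rw [← this]
      exact (rieszG ι₀ g).2
    have hWtop : W₀ = ⊤ := by
      have hd := rieszG_range_dense ι₁ hinj₁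
      have h1 : (LinearMap.range (rieszG ι₁)).topologicalClosure = ⊤ :=
        Submodule.dense_iff_topologicalClosure_eq_top.mp hd
      have h2 := (LinearMap.range (rieszG ι₁)).topologicalClosure_minimal hsub
        (Submodule.isClosed_topologicalClosure D₀)
      rw [h1] at h2
      exact le_antisymm le_top h2
    have hDdense : Dense (D₀ : Set (ES E B)) :=
      Submodule.dense_iff_topologicalClosure_eq_top.mpr hWtop
    intro x ε hε
    rw [Metric.dense_iff] at hDdense
    obtain ⟨z, hzball, hzD⟩ := hDdense (mkES E B x) (Real.sqrt ε) (Real.sqrt_pos.mpr hε)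
    set y : L.domain := ⟨((unES E B z : E) : H), (hD₀mem z).mp hzD⟩ with hydef
    refine ⟨y, ?_⟩
    have hdist : ‖mkES E B x - z‖ < Real.sqrt ε := by
      rw [norm_sub_rev, ← dist_eq_norm]
      exact Metric.mem_ball.mp hzball
    have hsq : ‖mkES E B x - z‖ ^ 2 < ε := by
      have hs : Real.sqrt ε * Real.sqrt ε = ε := Real.mul_self_sqrt hε.le
      nlinarith [norm_nonneg (mkES E B x - z)]
    have hnorm := esNorm_sq E B hBsymm hBnn (mkES E B x - z)
    have hyE : (⟨(y : H), hDE y.2⟩ : E) = unES E B z := Subtype.ext rfl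
    have hun : unES E B (mkES E B x - z) = x - unES E B z := rfl
    rw [hnorm, hun] at hsq
    rw [hyE]
    convert hsq using 3
    rfl
  · -- density implies uniqueness
    intro hd
    have hDdense : Dense (D₀ : Set (ES E B)) := by
      rw [Metric.dense_iff]
      intro x r hr
      obtain ⟨y, hy⟩ := hd (unES E B x) (r ^ 2) (by positivity)
      set z : ES E B := mkES E B ⟨(y : H), hDE y.2⟩ with hzdef
      refine ⟨z, ?_, (hD₀mem z).mpr y.2⟩
      rw [Metric.mem_ball, dist_eq_norm, norm_sub_rev]
      have hnorm := esNorm_sq E B hBsymm hBnn (x - z)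
      have hun : unES E B (x - z) = unES E B x - ⟨(y : H), hDE y.2⟩ := rfl
      rw [hun] at hnorm
      have hsq : ‖x - z‖ ^ 2 < r ^ 2 := by
        rw [hnorm]
        convert hy using 3
        rfl
      nlinarith [norm_nonneg (x - z)]
    refine ⟨T₁, ⟨hLT₁, hsa₁, hsub₁⟩, ?_⟩
    rintro S ⟨hLS, hSsa, hSE⟩
    have hdS : Dense (S.domain : Set H) := hSsa.dense_domain
    have hSsymm : S.IsFormalAdjoint S := by
      have h := LinearPMap.adjoint_isFormalAdjoint hdS
      rwa [LinearPMap.isSelfAdjoint_def.mp hSsa] at h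
    have hST : S ≤ T₁ := by
      refine le_assocOp ι₁ hK₁ hdr₁ S fun x => ?_
      have hxE : (x : H) ∈ E := hSE x.2
      refine ⟨mkES E B ⟨(x : H), hxE⟩, rfl, fun v => ?_⟩
      have hfun : (fun v : ES E B => (⟪S x + (x : H), ι₁ v⟫ : ℝ)) =
          fun v : ES E B => (⟪mkES E B ⟨(x : H), hxE⟩, v⟫ : ℝ) := by
        refine Continuous.ext_on hDdense
          ((innerSL ℝ (S x + (x : H))).comp ι₁).continuous
          (innerSL ℝ (mkES E B ⟨(x : H), hxE⟩)).continuous ?_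
        intro v hv
        have hyL : ((unES E B v : E) : H) ∈ L.domain := (hD₀mem v).mp hv
        set y : L.domain := ⟨((unES E B v : E) : H), hyL⟩ with hydef
        have hyS : (y : H) ∈ S.domain := hLS.1 y.2
        have hSy : L y = S ⟨(y : H), hyS⟩ := hLS.2 rfl
        have h1 : (⟪S x, ι₁ v⟫ : ℝ) = ⟪(x : H), S ⟨(y : H), hyS⟩⟫ :=
          hSsymm x ⟨(y : H), hyS⟩
        have h2 : (⟪(x : H), S ⟨(y : H), hyS⟩⟫ : ℝ) = ⟪L y, (x : H)⟫ := by
          rw [← hSy, real_inner_comm]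
        have h3 : (⟪L y, (x : H)⟫ : ℝ) = B ⟨(y : H), hDE y.2⟩ ⟨(x : H), hxE⟩ :=
          (hBagree y ⟨(x : H), hxE⟩).symm
        have h4 : B ⟨(y : H), hDE y.2⟩ ⟨(x : H), hxE⟩ =
            B ⟨(x : H), hxE⟩ (unES E B v) := by
          rw [hBsymm]
        show (⟪S x + (x : H), ι₁ v⟫ : ℝ) = ⟪mkES E B ⟨(x : H), hxE⟩, v⟫
        rw [inner_add_left, esInner_eq E B hBsymm hBnn, h1, h2, h3, h4]
        rfl
      exact congrFun hfun v
    have hdT₁ : Dense (T₁.domain : Set H) := assocOp_dense_domain ι₁ hK₁ hdr₁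
    have hT₁S : T₁ ≤ S := by
      have h1 : T₁.adjoint ≤ S.adjoint := adjoint_le_adjoint hdS hdT₁ hST
      rwa [LinearPMap.isSelfAdjoint_def.mp hsa₁,
        LinearPMap.isSelfAdjoint_def.mp hSsa] at h1
    exact LinearPMap.eq_of_le_of_domain_eq hST (le_antisymm hST.1 hT₁S.1)
end

section
/- For the characteristic Cauchy (Goursat/Riemann) problem associated to the operator L(φ) = ∂_{ξη}φ + (1/(2(ξ+η)))(∂_ξ φ + ∂_η φ), the Riemann function R(ξ,η;ξ₀,η₀) = √((ξ+η)/(ξ₀+η₀)) · ₂F₁(1/2, 1/2; 1; w) with w = −(ξ−ξ₀)(η−η₀)/((ξ₀+η₀)(ξ+η)) satisfies: (a) L*_{(ξ,η)}(R) = 0 where L*(ψ) = ∂_{ξη}ψ − ∂_ξ(ψ/(2(ξ+η))) − ∂_η(ψ/(2(ξ+η))); (b) on the characteristic η = η₀: ∂_ξ R = R/(2(ξ+η)); on ξ = ξ₀: ∂_η R = R/(2(ξ+η)); (c) R(ξ₀,η₀;ξ₀,η₀) = 1. -/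
open scoped BigOperators

/-- The Gauss hypergeometric function `₂F₁(1/2, 1/2; 1; w)`, via its power series. -/
noncomputable def gauss2F1half (w : ℝ) : ℝ :=
  ∑' k : ℕ, ((∏ i ∈ Finset.range k, ((1 : ℝ) / 2 + i)) / (Nat.factorial k)) ^ 2 * w ^ k

/-- The argument `w = −(ξ−ξ₀)(η−η₀)/((ξ₀+η₀)(ξ+η))` of the Riemann function. -/
noncomputable def riemannW (p₀ p : ℝ × ℝ) : ℝ :=
  -((p.1 - p₀.1) * (p.2 - p₀.2)) / ((p₀.1 + p₀.2) * (p.1 + p.2))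

/-- The Riemann function `R(ξ,η;ξ₀,η₀) = √((ξ+η)/(ξ₀+η₀)) ₂F₁(1/2,1/2;1;w)`. -/
noncomputable def riemannR (p₀ p : ℝ × ℝ) : ℝ :=
  Real.sqrt ((p.1 + p.2) / (p₀.1 + p₀.2)) * gauss2F1half (riemannW p₀ p)

noncomputable section
namespace Stmt17aux

/-- coefficients of ₂F₁(1/2,1/2;1;·) -/
def a (k : ℕ) : ℝ := ((∏ i ∈ Finset.range k, ((1 : ℝ) / 2 + i)) / (Nat.factorial k)) ^ 2

lemma a_zero : a 0 = 1 := by simp [a]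

lemma a_nonneg (k : ℕ) : 0 ≤ a k := sq_nonneg _

lemma a_rec (k : ℕ) : ((k : ℝ) + 1) ^ 2 * a (k + 1) = ((k : ℝ) + 1/2) ^ 2 * a k := by
  have hfac : (Nat.factorial (k+1) : ℝ) = (k+1) * Nat.factorial k := by
    push_cast [Nat.factorial_succ]; ring
  have hf : (Nat.factorial k : ℝ) ≠ 0 := Nat.cast_ne_zero.2 (Nat.factorial_ne_zero k)
  have hk1 : ((k:ℝ) + 1) ≠ 0 := by positivity
  simp only [a, Finset.prod_range_succ, hfac]
  field_simp
  ring

lemma a_le (k : ℕ) : a k ≤ 1 / ((k : ℝ) + 1) := by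
  induction k with
  | zero => simp [a_zero]
  | succ n ih =>
    have h2 := a_rec n
    have ha := a_nonneg n
    have hpos : (0:ℝ) < (n:ℝ) + 1 := by positivity
    have ih' : a n * ((n:ℝ)+1) ≤ 1 := (le_div_iff₀ hpos).1 ih
    have key : ((n:ℝ) + 1/2)^2 * ((n:ℝ)+2) ≤ ((n:ℝ)+1)^3 := by nlinarith [Nat.cast_nonneg (α := ℝ) n]
    have hrepr : a (n+1) = ((n:ℝ) + 1/2)^2 * a n / ((n:ℝ)+1)^2 := by
      field_simp at h2 ⊢; linarith [h2]
    rw [hrepr]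
    push_cast
    rw [div_le_div_iff₀ (by positivity) (by positivity)]
    nlinarith [mul_le_mul_of_nonneg_left ih' (by positivity : (0:ℝ) ≤ ((n:ℝ)+1/2)^2*((n:ℝ)+2)), key, hpos, ha]

lemma a_le_one (k : ℕ) : |a k| ≤ 1 := by
  rw [abs_of_nonneg (a_nonneg k)]
  calc a k ≤ 1 / ((k:ℝ)+1) := a_le k
    _ ≤ 1 := by rw [div_le_one (by positivity)]; linarith [Nat.cast_nonneg (α := ℝ) k]

def b (k : ℕ) : ℝ := ((k : ℝ) + 1) * a (k + 1)

lemma b_le_one (k : ℕ) : |b k| ≤ 1 := by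
  have h := a_le (k+1)
  have h0 := a_nonneg (k+1)
  rw [b, abs_of_nonneg (by positivity)]
  push_cast at h
  calc ((k:ℝ)+1) * a (k+1) ≤ ((k:ℝ)+1) * (1/((k:ℝ)+1+1)) := by nlinarith
    _ ≤ 1 := by rw [mul_one_div, div_le_one (by positivity)]; linarith


def S (c : ℕ → ℝ) (w : ℝ) : ℝ := ∑' n, c n * w ^ n

lemma summable_S (c : ℕ → ℝ) (hc : ∀ n, |c n| ≤ (n : ℝ) + 1) {w : ℝ} (hw : |w| < 1) :
    Summable (fun n => c n * w ^ n) := by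
  have h1 : Summable (fun n : ℕ => ((n : ℝ) + 1) * |w| ^ n) := by
    have := summable_pow_mul_geometric_of_norm_lt_one (R := ℝ) (k := 1) (r := |w|)
      (by simpa using hw)
    have h2 : Summable (fun n : ℕ => |w| ^ n) := summable_geometric_of_lt_one (abs_nonneg w) hw
    simpa [add_mul] using (this.add h2)
  apply Summable.of_norm
  apply Summable.of_nonneg_of_le (fun n => norm_nonneg _) _ h1
  intro n
  have : ‖c n * w ^ n‖ = |c n| * |w| ^ n := by
    rw [norm_mul, norm_pow]; rfl
  rw [this]
  exact mul_le_mul_of_nonneg_right (hc n) (by positivity)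

lemma hasSum_S (c : ℕ → ℝ) (hc : ∀ n, |c n| ≤ (n : ℝ) + 1) {w : ℝ} (hw : |w| < 1) :
    HasSum (fun n => c n * w ^ n) (S c w) := (summable_S c hc hw).hasSum

lemma hasFPowerSeriesOnBall_S (c : ℕ → ℝ) (hc : ∀ n, |c n| ≤ 1) :
    HasFPowerSeriesOnBall (S c) (FormalMultilinearSeries.ofScalars ℝ c) 0 1 where
  r_le := by
    apply FormalMultilinearSeries.le_radius_of_bound _ 1
    intro n
    rw [FormalMultilinearSeries.ofScalars_norm]
    simpa using hc n
  r_pos := one_pos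
  hasSum := by
    intro y hy
    simp only [EMetric.mem_ball, edist_dist, dist_zero_right, Real.norm_eq_abs] at hy
    have hy' : |y| < 1 := by
      rw [← ENNReal.ofReal_one] at hy
      exact (ENNReal.ofReal_lt_ofReal_iff one_pos).1 hy
    have h := hasSum_S c (fun n => (hc n).trans (by linarith [Nat.cast_nonneg (α := ℝ) n])) hy'
    simp only [FormalMultilinearSeries.ofScalars_apply_eq, smul_eq_mul, zero_add]
    exact h

lemma hasDerivAt_S (c : ℕ → ℝ) (hc : ∀ n, |c n| ≤ 1) {y : ℝ} (hy : |y| < 1) :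
    HasDerivAt (S c) (S (fun n => ((n : ℝ) + 1) * c (n + 1)) y) y := by
  have hp := hasFPowerSeriesOnBall_S c hc
  have hymem : y ∈ Metric.eball (0 : ℝ) 1 := by
    simp only [Metric.mem_eball, edist_dist, dist_zero_right, Real.norm_eq_abs]
    rw [← ENNReal.ofReal_one]
    exact (ENNReal.ofReal_lt_ofReal_iff one_pos).2 hy
  have hd := hp.fderiv
  have hsum := hd.hasSum (y := y) hymem
  have hsum1 := hsum.mapL (ContinuousLinearMap.apply ℝ ℝ (1 : ℝ))
  have hterm : ∀ n, (ContinuousLinearMap.apply ℝ ℝ (1 : ℝ))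
      ((FormalMultilinearSeries.ofScalars ℝ c).derivSeries n (fun _ => y))
      = (((n : ℝ) + 1) * c (n + 1)) * y ^ n := by
    intro n
    have h1 : (fun _ : Fin n => y) = fun _ : Fin n => y • (1 : ℝ) := by funext i; simp
    rw [ContinuousLinearMap.apply_apply, h1, ContinuousMultilinearMap.map_smul_univ]
    simp only [Finset.prod_const, Finset.card_univ, Fintype.card_fin,
      ContinuousLinearMap.smul_apply]
    rw [FormalMultilinearSeries.derivSeries_apply_diag]
    rw [FormalMultilinearSeries.ofScalars_apply_eq]
    simp [smul_eq_mul]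
    ring
  rw [funext hterm] at hsum1
  have hdif : DifferentiableAt ℝ (S c) y := (hp.analyticAt_of_mem hymem).differentiableAt
  have : S (fun n => ((n : ℝ) + 1) * c (n + 1)) y = fderiv ℝ (S c) y 1 := by
    rw [S]
    rw [hsum1.tsum_eq]
    simp
  rw [this, fderiv_apply_one_eq_deriv]
  exact hdif.hasDerivAt

def pad (c : ℕ → ℝ) : ℕ → ℝ
  | 0 => 0
  | (n+1) => c n

lemma hasSum_pad {c : ℕ → ℝ} {w s : ℝ} (h : HasSum (fun n => c n * w ^ n) s) :
    HasSum (fun n => pad c n * w ^ n) (w * s) := by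
  have h1 : HasSum (fun n => pad c (n + 1) * w ^ (n + 1)) (w * s) := by
    have heq : (fun n => pad c (n + 1) * w ^ (n + 1)) = fun n => w * (c n * w ^ n) := by
      funext n; simp [pad, pow_succ]; ring
    rw [heq]
    exact h.mul_left w
  have := (hasSum_nat_add_iff (f := fun n => pad c n * w ^ n) 1).1 h1
  simpa [pad] using this


def c2 (k : ℕ) : ℝ := ((k : ℝ) + 1) * b (k + 1)

lemma a_bnd : ∀ n : ℕ, |a n| ≤ (n : ℝ) + 1 :=
  fun n => (a_le_one n).trans (by linarith [Nat.cast_nonneg (α := ℝ) n])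

lemma b_bnd : ∀ n : ℕ, |b n| ≤ (n : ℝ) + 1 :=
  fun n => (b_le_one n).trans (by linarith [Nat.cast_nonneg (α := ℝ) n])

lemma c2_bnd : ∀ n : ℕ, |c2 n| ≤ (n : ℝ) + 1 := by
  intro n
  rw [c2, abs_mul, abs_of_nonneg (by positivity : (0:ℝ) ≤ (n:ℝ)+1)]
  calc ((n:ℝ)+1) * |b (n+1)| ≤ ((n:ℝ)+1) * 1 :=
        mul_le_mul_of_nonneg_left (b_le_one _) (by positivity)
    _ = (n:ℝ)+1 := mul_one _

lemma S_at_zero (c : ℕ → ℝ) : S c 0 = c 0 := by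
  rw [S, tsum_eq_single 0]
  · simp
  · intro n hn; simp [zero_pow hn]

lemma ode {w : ℝ} (hw : |w| < 1) :
    w * (1 - w) * S c2 w + (1 - 2 * w) * S b w - S a w / 4 = 0 := by
  have hA := hasSum_S a a_bnd hw
  have hB := hasSum_S b b_bnd hw
  have hC := hasSum_S c2 c2_bnd hw
  have pd1 := hasSum_pad hC
  have pd2 := hasSum_pad pd1
  have pB := hasSum_pad hB
  have total := ((pd1.sub pd2).add (hB.sub (pB.mul_left 2))).sub (hA.div_const 4)
  have hzero : (fun n => ((pad c2 n * w ^ n - pad (pad c2) n * w ^ n)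
      + (b n * w ^ n - 2 * (pad b n * w ^ n))) - a n * w ^ n / 4) = fun _ => (0:ℝ) := by
    funext n
    match n with
    | 0 =>
      have h := a_rec 0
      norm_num at h
      simp only [pad, b, c2]
      norm_num
      linarith
    | 1 =>
      have h := a_rec 1
      push_cast at h
      simp only [pad, b, c2]
      push_cast
      linear_combination w * h
    | (k+2) =>
      have h := a_rec (k+2)
      push_cast at h
      simp only [pad, b, c2]
      push_cast
      linear_combination w ^ (k+2) * h
  rw [hzero] at total
  have hz := total.unique hasSum_zero
  linear_combination hz


section TwoVar

open ContinuousLinearMap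

def e1 : ℝ × ℝ →L[ℝ] ℝ := ContinuousLinearMap.fst ℝ ℝ ℝ
def e2 : ℝ × ℝ →L[ℝ] ℝ := ContinuousLinearMap.snd ℝ ℝ ℝ

@[simp] lemma e1_apply (v : ℝ × ℝ) : e1 v = v.1 := rfl
@[simp] lemma e2_apply (v : ℝ × ℝ) : e2 v = v.2 := rfl

lemma clm_ext {L M : ℝ × ℝ →L[ℝ] ℝ} (h1 : L (1,0) = M (1,0)) (h2 : L (0,1) = M (0,1)) :
    L = M := by
  apply ContinuousLinearMap.ext
  intro v
  rw [show v = v.1 • ((1:ℝ),(0:ℝ)) + v.2 • ((0:ℝ),(1:ℝ)) by apply Prod.ext <;> simp]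
  rw [map_add, map_add, map_smul, map_smul, map_smul, map_smul, h1, h2]

lemma hasFDerivAt_div' {N D : ℝ × ℝ → ℝ} {N' D' : ℝ × ℝ →L[ℝ] ℝ} {q : ℝ × ℝ}
    (hN : HasFDerivAt N N' q) (hD : HasFDerivAt D D' q) (h : D q ≠ 0) :
    HasFDerivAt (fun y => N y / D y)
      ((1 / D q) • N' + (-(N q) / (D q)^2) • D') q := by
  have hinv : HasDerivAt (fun x : ℝ => x⁻¹) (-((D q)^2)⁻¹) (D q) := hasDerivAt_inv h
  have hcomp := hinv.comp_hasFDerivAt q hD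
  have hm := hN.mul hcomp
  have heq : (fun y => N y / D y) = fun y => N y * ((fun x : ℝ => x⁻¹) ∘ D) y := by
    funext y; simp [div_eq_mul_inv, Function.comp]
  rw [heq]
  refine hm.congr_fderiv ?_
  apply clm_ext <;>
    simp only [ContinuousLinearMap.add_apply, ContinuousLinearMap.smul_apply,
      Function.comp, smul_eq_mul] <;>
  · field_simp
    ring

variable {p₀ q : ℝ × ℝ}

def WX (p₀ q : ℝ × ℝ) : ℝ := -((q.2 - p₀.2) * (q.2 + p₀.1)) / ((p₀.1 + p₀.2) * (q.1 + q.2)^2)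
def WY (p₀ q : ℝ × ℝ) : ℝ := -((q.1 - p₀.1) * (q.1 + p₀.2)) / ((p₀.1 + p₀.2) * (q.1 + q.2)^2)
def Hf (p₀ q : ℝ × ℝ) : ℝ := Real.sqrt ((q.1 + q.2) / (p₀.1 + p₀.2))
def G1 (p₀ q : ℝ × ℝ) : ℝ :=
  riemannR p₀ q / (2 * (q.1 + q.2)) + Hf p₀ q * S b (riemannW p₀ q) * WX p₀ q
def G2 (p₀ q : ℝ × ℝ) : ℝ :=
  riemannR p₀ q / (2 * (q.1 + q.2)) + Hf p₀ q * S b (riemannW p₀ q) * WY p₀ q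

lemma gauss_eq_S : gauss2F1half = S a := rfl

lemma riemannR_eq : riemannR p₀ q = Hf p₀ q * S a (riemannW p₀ q) := rfl

lemma hasFDerivAt_W (h₀ : 0 < p₀.1 + p₀.2) (hq : 0 < q.1 + q.2) :
    HasFDerivAt (riemannW p₀) (WX p₀ q • e1 + WY p₀ q • e2) q := by
  have hu : HasFDerivAt (fun y : ℝ × ℝ => y.1 - p₀.1) e1 q := hasFDerivAt_fst.sub_const _
  have hv : HasFDerivAt (fun y : ℝ × ℝ => y.2 - p₀.2) e2 q := hasFDerivAt_snd.sub_const _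
  have hN : HasFDerivAt (fun y : ℝ × ℝ => -((y.1 - p₀.1) * (y.2 - p₀.2)))
      (-((q.1 - p₀.1) • e2 + (q.2 - p₀.2) • e1)) q := (hu.mul hv).neg
  have hD : HasFDerivAt (fun y : ℝ × ℝ => (p₀.1 + p₀.2) * (y.1 + y.2))
      ((p₀.1 + p₀.2) • (e1 + e2)) q :=
    (hasFDerivAt_fst.add hasFDerivAt_snd).const_mul _
  have hD0 : (p₀.1 + p₀.2) * (q.1 + q.2) ≠ 0 := ne_of_gt (mul_pos h₀ hq)
  have h := hasFDerivAt_div' hN hD hD0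
  have : riemannW p₀ = fun y : ℝ × ℝ =>
      (fun y : ℝ × ℝ => -((y.1 - p₀.1) * (y.2 - p₀.2))) y /
      (fun y : ℝ × ℝ => (p₀.1 + p₀.2) * (y.1 + y.2)) y := rfl
  rw [this]
  convert h using 1
  have hs := ne_of_gt hq
  have hc := ne_of_gt h₀
  apply clm_ext <;>
    simp only [ContinuousLinearMap.add_apply, ContinuousLinearMap.smul_apply,
      ContinuousLinearMap.neg_apply, e1_apply, e2_apply, WX, WY, smul_eq_mul] <;>
  · field_simp
    ring

lemma hasFDerivAt_H (h₀ : 0 < p₀.1 + p₀.2) (hq : 0 < q.1 + q.2) :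
    HasFDerivAt (Hf p₀) ((Hf p₀ q / (2 * (q.1 + q.2))) • (e1 + e2)) q := by
  have hs : HasFDerivAt (fun y : ℝ × ℝ => (y.1 + y.2) / (p₀.1 + p₀.2))
      ((1 / (p₀.1 + p₀.2)) • (e1 + e2)) q := by
    have h1 : HasFDerivAt (fun y : ℝ × ℝ => (1 / (p₀.1 + p₀.2)) * (y.1 + y.2))
        ((1 / (p₀.1 + p₀.2)) • (e1 + e2)) q :=
      (hasFDerivAt_fst.add hasFDerivAt_snd).const_mul _
    have : (fun y : ℝ × ℝ => (y.1 + y.2) / (p₀.1 + p₀.2))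
        = fun y : ℝ × ℝ => (1 / (p₀.1 + p₀.2)) * (y.1 + y.2) := by
      funext y; field_simp
    rw [this]; exact h1
  have hpos : 0 < (q.1 + q.2) / (p₀.1 + p₀.2) := div_pos hq h₀
  have hsq : HasDerivAt Real.sqrt (1 / (2 * Real.sqrt ((q.1 + q.2) / (p₀.1 + p₀.2))))
      ((q.1 + q.2) / (p₀.1 + p₀.2)) := Real.hasDerivAt_sqrt (ne_of_gt hpos)
  have hcomp := hsq.comp_hasFDerivAt q hs
  have key : Hf p₀ q / (2 * (q.1 + q.2))
      = 1 / (2 * Real.sqrt ((q.1 + q.2) / (p₀.1 + p₀.2))) * (1 / (p₀.1 + p₀.2)) := by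
    set t := Real.sqrt ((q.1 + q.2) / (p₀.1 + p₀.2)) with ht
    have hsp : 0 < t := Real.sqrt_pos.2 hpos
    have hss : t * t = (q.1 + q.2) / (p₀.1 + p₀.2) := Real.mul_self_sqrt hpos.le
    have hune : Hf p₀ q = t := rfl
    have hss2 : t * t * (p₀.1 + p₀.2) = q.1 + q.2 := by
      rw [hss]; field_simp
    rw [hune, div_mul_div_comm, one_mul,
      div_eq_div_iff (by positivity) (by positivity)]
    linear_combination 2 * hss2
  rw [key, ← smul_smul]
  exact hcomp

lemma hasFDerivAt_R (h₀ : 0 < p₀.1 + p₀.2) (hq : 0 < q.1 + q.2)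
    (hw : |riemannW p₀ q| < 1) :
    HasFDerivAt (riemannR p₀) (G1 p₀ q • e1 + G2 p₀ q • e2) q := by
  have hW := hasFDerivAt_W h₀ hq
  have hF : HasDerivAt (S a) (S b (riemannW p₀ q)) (riemannW p₀ q) :=
    hasDerivAt_S a a_le_one hw
  have hFW := hF.comp_hasFDerivAt q hW
  have hH := hasFDerivAt_H h₀ hq
  have hmul := hH.mul hFW
  have : riemannR p₀ = fun y : ℝ × ℝ => Hf p₀ y * (S a ∘ riemannW p₀) y := rfl
  rw [this]
  refine hmul.congr_fderiv ?_
  apply clm_ext <;>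
    simp only [ContinuousLinearMap.add_apply, ContinuousLinearMap.smul_apply,
      e1_apply, e2_apply, smul_eq_mul, G1, G2, riemannR_eq, Function.comp, Function.comp_apply] <;>
  · ring

end TwoVar

section Main

variable {p₀ q : ℝ × ℝ}

lemma hasFDerivAt_WX (h₀ : 0 < p₀.1 + p₀.2) (hq : 0 < q.1 + q.2) :
    HasFDerivAt (WX p₀)
      ((2 * ((q.2 - p₀.2) * (q.2 + p₀.1)) / ((p₀.1 + p₀.2) * (q.1 + q.2)^3)) • e1
       + (2 * ((q.2 - p₀.2) * (q.2 + p₀.1)) / ((p₀.1 + p₀.2) * (q.1 + q.2)^3)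
          + (-(2 * q.2 + p₀.1 - p₀.2)) / ((p₀.1 + p₀.2) * (q.1 + q.2)^2)) • e2) q := by
  have hv : HasFDerivAt (fun y : ℝ × ℝ => y.2 - p₀.2) e2 q := hasFDerivAt_snd.sub_const _
  have hv2 : HasFDerivAt (fun y : ℝ × ℝ => y.2 + p₀.1) e2 q := hasFDerivAt_snd.add_const _
  have hN := (hv.mul hv2).neg
  have hsum : HasFDerivAt (fun y : ℝ × ℝ => y.1 + y.2) (e1 + e2) q :=
    hasFDerivAt_fst.add hasFDerivAt_snd
  have hD := (hsum.mul hsum).const_mul (p₀.1 + p₀.2)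
  have hD0 : (p₀.1 + p₀.2) * ((q.1 + q.2) * (q.1 + q.2)) ≠ 0 := by positivity
  have h := hasFDerivAt_div' hN hD hD0
  have hfun : WX p₀ = fun y : ℝ × ℝ =>
      (fun y : ℝ × ℝ => -((y.2 - p₀.2) * (y.2 + p₀.1))) y /
      (fun y : ℝ × ℝ => (p₀.1 + p₀.2) * ((y.1 + y.2) * (y.1 + y.2))) y := by
    funext y; simp only [WX, pow_two]
  rw [hfun]
  refine h.congr_fderiv ?_
  have hs := ne_of_gt hq
  have hc := ne_of_gt h₀
  apply clm_ext <;>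
    simp only [ContinuousLinearMap.add_apply, ContinuousLinearMap.smul_apply,
      ContinuousLinearMap.neg_apply, e1_apply, e2_apply, smul_eq_mul, Pi.mul_apply, Pi.neg_apply] <;>
  · field_simp
    ring

lemma hasFDerivAt_WY (h₀ : 0 < p₀.1 + p₀.2) (hq : 0 < q.1 + q.2) :
    HasFDerivAt (WY p₀)
      ((2 * ((q.1 - p₀.1) * (q.1 + p₀.2)) / ((p₀.1 + p₀.2) * (q.1 + q.2)^3)
          + (-(2 * q.1 - p₀.1 + p₀.2)) / ((p₀.1 + p₀.2) * (q.1 + q.2)^2)) • e1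
       + (2 * ((q.1 - p₀.1) * (q.1 + p₀.2)) / ((p₀.1 + p₀.2) * (q.1 + q.2)^3)) • e2) q := by
  have hv : HasFDerivAt (fun y : ℝ × ℝ => y.1 - p₀.1) e1 q := hasFDerivAt_fst.sub_const _
  have hv2 : HasFDerivAt (fun y : ℝ × ℝ => y.1 + p₀.2) e1 q := hasFDerivAt_fst.add_const _
  have hN := (hv.mul hv2).neg
  have hsum : HasFDerivAt (fun y : ℝ × ℝ => y.1 + y.2) (e1 + e2) q :=
    hasFDerivAt_fst.add hasFDerivAt_snd
  have hD := (hsum.mul hsum).const_mul (p₀.1 + p₀.2)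
  have hD0 : (p₀.1 + p₀.2) * ((q.1 + q.2) * (q.1 + q.2)) ≠ 0 := by positivity
  have h := hasFDerivAt_div' hN hD hD0
  have hfun : WY p₀ = fun y : ℝ × ℝ =>
      (fun y : ℝ × ℝ => -((y.1 - p₀.1) * (y.1 + p₀.2))) y /
      (fun y : ℝ × ℝ => (p₀.1 + p₀.2) * ((y.1 + y.2) * (y.1 + y.2))) y := by
    funext y; simp only [WY, pow_two]
  rw [hfun]
  refine h.congr_fderiv ?_
  have hs := ne_of_gt hq
  have hc := ne_of_gt h₀
  apply clm_ext <;>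
    simp only [ContinuousLinearMap.add_apply, ContinuousLinearMap.smul_apply,
      ContinuousLinearMap.neg_apply, e1_apply, e2_apply, smul_eq_mul, Pi.mul_apply, Pi.neg_apply] <;>
  · field_simp
    ring

end Main

end Stmt17aux
end

open Stmt17aux in
set_option maxHeartbeats 2000000 in
/-- The Riemann function for `L(φ) = ∂_{ξη}φ + (∂_ξφ + ∂_ηφ)/(2(ξ+η))` satisfies:
(a) `L*R = 0` in `(ξ,η)` on the domain `{ξ+η > 0, |w| < 1}` (with `ξ₀+η₀ > 0`), where
`L*(ψ) = ∂_{ξη}ψ − ∂_ξ(ψ/(2(ξ+η))) − ∂_η(ψ/(2(ξ+η)))`;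
(b) on the characteristics `η = η₀` and `ξ = ξ₀`, `∂_ξ R = R/(2(ξ+η))` resp.
`∂_η R = R/(2(ξ+η))`; and (c) `R(ξ₀,η₀;ξ₀,η₀) = 1`. -/
theorem stmt17 (p₀ : ℝ × ℝ) (h₀ : 0 < p₀.1 + p₀.2) :
    (∀ p : ℝ × ℝ, 0 < p.1 + p.2 → |riemannW p₀ p| < 1 →
      fderiv ℝ (fun q : ℝ × ℝ => fderiv ℝ (riemannR p₀) q (1, 0)) p (0, 1)
        - fderiv ℝ (fun q : ℝ × ℝ => riemannR p₀ q / (2 * (q.1 + q.2))) p (1, 0)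
        - fderiv ℝ (fun q : ℝ × ℝ => riemannR p₀ q / (2 * (q.1 + q.2))) p (0, 1) = 0) ∧
    (∀ ξ : ℝ, 0 < ξ + p₀.2 → |riemannW p₀ (ξ, p₀.2)| < 1 →
      fderiv ℝ (riemannR p₀) (ξ, p₀.2) (1, 0)
        = riemannR p₀ (ξ, p₀.2) / (2 * (ξ + p₀.2))) ∧
    (∀ η : ℝ, 0 < p₀.1 + η → |riemannW p₀ (p₀.1, η)| < 1 →
      fderiv ℝ (riemannR p₀) (p₀.1, η) (0, 1)
        = riemannR p₀ (p₀.1, η) / (2 * (p₀.1 + η))) ∧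
    riemannR p₀ p₀ = 1 := by
  refine ⟨?_, ?_, ?_, ?_⟩
  · -- part (a)
    intro p hp hw
    have hc1 : ContinuousAt (fun q : ℝ × ℝ => q.1 + q.2) p := by fun_prop
    have hWfun : riemannW p₀ = fun q : ℝ × ℝ =>
        -((q.1 - p₀.1) * (q.2 - p₀.2)) / ((p₀.1 + p₀.2) * (q.1 + q.2)) := rfl
    have hWc : ContinuousAt (riemannW p₀) p := by
      rw [hWfun]
      exact ContinuousAt.div (by fun_prop) (by fun_prop) (ne_of_gt (mul_pos h₀ hp))
    have habs : ContinuousAt (fun q : ℝ × ℝ => |riemannW p₀ q|) p :=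
      continuous_abs.continuousAt.comp hWc
    have hok : ∀ᶠ q in nhds p, 0 < q.1 + q.2 ∧ |riemannW p₀ q| < 1 := by
      have e1' := hc1.preimage_mem_nhds (Ioi_mem_nhds hp)
      have e2' := habs.preimage_mem_nhds (Iio_mem_nhds hw)
      filter_upwards [e1', e2'] with q hq1 hq2
      exact ⟨hq1, hq2⟩
    have hev : (fun q : ℝ × ℝ => fderiv ℝ (riemannR p₀) q (1, 0)) =ᶠ[nhds p] G1 p₀ := by
      filter_upwards [hok] with q hq
      rw [(hasFDerivAt_R h₀ hq.1 hq.2).fderiv]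
      simp only [ContinuousLinearMap.add_apply, ContinuousLinearMap.smul_apply,
        e1_apply, e2_apply, smul_eq_mul, mul_one, mul_zero, add_zero]
    have hfe : fderiv ℝ (fun q : ℝ × ℝ => fderiv ℝ (riemannR p₀) q (1, 0)) p
        = fderiv ℝ (G1 p₀) p := hev.fderiv_eq
    have hRd := hasFDerivAt_R h₀ hp hw
    have h2s : HasFDerivAt (fun y : ℝ × ℝ => 2 * (y.1 + y.2)) ((2 : ℝ) • (e1 + e2)) p :=
      (hasFDerivAt_fst.add hasFDerivAt_snd).const_mul _
    have h2s0 : 2 * (p.1 + p.2) ≠ 0 := by positivity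
    have hA := hasFDerivAt_div' hRd h2s h2s0
    have hW := hasFDerivAt_W h₀ hp
    have hH := hasFDerivAt_H h₀ hp
    have hF1 : HasDerivAt (S b) (S c2 (riemannW p₀ p)) (riemannW p₀ p) :=
      hasDerivAt_S b b_le_one hw
    have hF1W := hF1.comp_hasFDerivAt p hW
    have hWX := hasFDerivAt_WX h₀ hp
    have hB := (hH.mul hF1W).mul hWX
    have hG1 : HasFDerivAt (G1 p₀) _ p := hA.add hB
    have hs := ne_of_gt hp
    have hc := ne_of_gt h₀
    have hwxwy : WX p₀ p * WY p₀ p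
        = -(riemannW p₀ p * (1 - riemannW p₀ p)) / (p.1 + p.2)^2 := by
      simp only [WX, WY, riemannW]
      field_simp
      ring
    have hdxy : 2 * ((p.2 - p₀.2) * (p.2 + p₀.1)) / ((p₀.1 + p₀.2) * (p.1 + p.2)^3)
          + (-(2 * p.2 + p₀.1 - p₀.2)) / ((p₀.1 + p₀.2) * (p.1 + p.2)^2)
        = (2 * riemannW p₀ p - 1) / (p.1 + p.2)^2 := by
      simp only [riemannW]
      field_simp
      ring
    have hode := ode hw
    rw [hfe, hG1.fderiv, hA.fderiv]
    simp only [ContinuousLinearMap.add_apply, ContinuousLinearMap.smul_apply,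
      ContinuousLinearMap.neg_apply, e1_apply, e2_apply, smul_eq_mul, Function.comp, Pi.mul_apply,
      Function.comp_apply]
    simp only [G1, G2, riemannR_eq]
    linear_combination (norm := (field_simp; ring1)) (Hf p₀ p * S c2 (riemannW p₀ p)) * hwxwy
      + (Hf p₀ p * S b (riemannW p₀ p)) * hdxy
      - (Hf p₀ p / (p.1 + p.2)^2) * hode
  · -- part (b1)
    intro ξ hξ hw
    have hq : (0:ℝ) < (ξ, p₀.2).1 + (ξ, p₀.2).2 := hξ
    rw [(hasFDerivAt_R h₀ hq hw).fderiv]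
    simp only [ContinuousLinearMap.add_apply, ContinuousLinearMap.smul_apply,
      e1_apply, e2_apply, smul_eq_mul, mul_one, mul_zero, add_zero]
    simp [G1, WX]
  · -- part (b2)
    intro η hη hw
    have hq : (0:ℝ) < (p₀.1, η).1 + (p₀.1, η).2 := hη
    rw [(hasFDerivAt_R h₀ hq hw).fderiv]
    simp only [ContinuousLinearMap.add_apply, ContinuousLinearMap.smul_apply,
      e1_apply, e2_apply, smul_eq_mul, mul_one, mul_zero, add_zero, zero_mul, zero_add]
    simp [G2, WY]
  · -- part (c)
    have hW0 : riemannW p₀ p₀ = 0 := by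
      rw [riemannW]; simp
    rw [riemannR, hW0, div_self (ne_of_gt h₀), Real.sqrt_one, one_mul]
    rw [show gauss2F1half 0 = S Stmt17aux.a 0 from rfl, S_at_zero, a_zero]
end
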